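/- arXiv:1804.08430 — 10 statements merged into one kernel-verified Lean document; each statement's English description precedes it below -/
import Mathlib

section
/- For any compact metric spaces X and Y, there exists an optimal correspondence, i.e., a correspondence R between X and Y with d_GH(X,Y) = (1/2)·dis R. Moreover, such an R can be chosen closed in X × Y. -/
def IsCorrespondence {X Y : Type*} (R : Set (X × Y)) : Prop :=
  (∀ x : X, ∃ y : Y, (x, y) ∈ R) ∧ (∀ y : Y, ∃ x : X, (x, y) ∈ R)

noncomputable def distortion {X Y : Type*} [MetricSpace X] [MetricSpace Y]
    (σ : Set (X × Y)) : ℝ :=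
  sSup {d : ℝ | ∃ p ∈ σ, ∃ q ∈ σ, d = |dist p.1 q.1 - dist p.2 q.2|}

open Metric Set GromovHausdorff

lemma distortion_bddAbove {X Y : Type*} [MetricSpace X] [CompactSpace X]
    [MetricSpace Y] [CompactSpace Y] (σ : Set (X × Y)) :
    BddAbove {d : ℝ | ∃ p ∈ σ, ∃ q ∈ σ, d = |dist p.1 q.1 - dist p.2 q.2|} := by
  refine ⟨diam (univ : Set X) + diam (univ : Set Y), ?_⟩
  rintro d ⟨p, -, q, -, rfl⟩
  have h1 : dist p.1 q.1 ≤ diam (univ : Set X) :=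
    dist_le_diam_of_mem (isCompact_univ.isBounded) (mem_univ _) (mem_univ _)
  have h2 : dist p.2 q.2 ≤ diam (univ : Set Y) :=
    dist_le_diam_of_mem (isCompact_univ.isBounded) (mem_univ _) (mem_univ _)
  have := dist_nonneg (x := p.1) (y := q.1)
  have := dist_nonneg (x := p.2) (y := q.2)
  rw [abs_sub_le_iff]
  constructor <;> linarith

/-- The Gromov-Hausdorff distance is at most half the distortion of any correspondence. -/
lemma ghDist_le_distortion_div_two {X Y : Type*} [MetricSpace X] [CompactSpace X] [Nonempty X]
    [MetricSpace Y] [CompactSpace Y] [Nonempty Y] (R : Set (X × Y))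
    (hR : IsCorrespondence R) : ghDist X Y ≤ distortion R / 2 := by
  obtain ⟨x0⟩ := ‹Nonempty X›
  obtain ⟨y0, hy0⟩ := hR.1 x0
  haveI : Nonempty R := ⟨⟨(x0, y0), hy0⟩⟩
  have hD0 : 0 ≤ distortion R := by
    have : |dist (x0, y0).1 (x0, y0).1 - dist (x0, y0).2 (x0, y0).2| ≤ distortion R :=
      le_csSup (distortion_bddAbove R) ⟨(x0, y0), hy0, (x0, y0), hy0, rfl⟩
    exact (abs_nonneg _).trans this
  refine le_of_forall_pos_le_add fun δ δ0 => ?_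
  set D := distortion R with hD
  have Hb : ∀ p q : R, |dist (p.1.1) (q.1.1) - dist (p.1.2) (q.1.2)| ≤ 2 * (D / 2 + δ) := by
    intro p q
    have : |dist (p.1.1) (q.1.1) - dist (p.1.2) (q.1.2)| ≤ D :=
      le_csSup (distortion_bddAbove R) ⟨p.1, p.2, q.1, q.2, rfl⟩
    linarith
  letI : MetricSpace (X ⊕ Y) :=
    glueMetricApprox (fun p : R => p.1.1) (fun p : R => p.1.2) (D / 2 + δ) (by linarith) Hb
  let Fl := @Sum.inl X Y
  let Fr := @Sum.inr X Y
  have Il : Isometry Fl := Isometry.of_dist_eq fun x y => rfl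
  have Ir : Isometry Fr := Isometry.of_dist_eq fun x y => rfl
  have key : ∀ p : R, dist (Fl p.1.1) (Fr p.1.2) = D / 2 + δ := fun p =>
    glueDist_glued_points (fun p : R => p.1.1) (fun p : R => p.1.2) (D / 2 + δ) p
  have hH : hausdorffDist (range Fl) (range Fr) ≤ D / 2 + δ := by
    refine hausdorffDist_le_of_mem_dist (by linarith) ?_ ?_
    · rintro _ ⟨x, rfl⟩
      obtain ⟨y, hy⟩ := hR.1 x
      exact ⟨Fr y, mem_range_self _, (key ⟨(x, y), hy⟩).le⟩
    · rintro _ ⟨y, rfl⟩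
      obtain ⟨x, hx⟩ := hR.2 y
      refine ⟨Fl x, mem_range_self _, ?_⟩
      rw [dist_comm]
      exact (key ⟨(x, y), hx⟩).le
  exact (ghDist_le_hausdorffDist Il Ir).trans hH

theorem exists_optimal_correspondence {X Y : Type*} [MetricSpace X] [CompactSpace X] [Nonempty X]
    [MetricSpace Y] [CompactSpace Y] [Nonempty Y] :
    ∃ R : Set (X × Y), IsCorrespondence R ∧ IsClosed R ∧
      GromovHausdorff.ghDist X Y = distortion R / 2 := by
  set H := ghDist X Y with hHdef
  have hH0 : 0 ≤ H := by
    rw [hHdef, ghDist]; exact dist_nonneg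
  set f := optimalGHInjl X Y with hf
  set g := optimalGHInjr X Y with hg
  have hIf : Isometry f := isometry_optimalGHInjl X Y
  have hIg : Isometry g := isometry_optimalGHInjr X Y
  have hHd : hausdorffDist (range f) (range g) = H := hausdorffDist_optimal
  have hne : EMetric.hausdorffEdist (range f) (range g) ≠ ⊤ :=
    hausdorffEdist_ne_top_of_nonempty_of_bounded (range_nonempty _) (range_nonempty _)
      (isCompact_range hIf.continuous).isBounded (isCompact_range hIg.continuous).isBounded
  set R : Set (X × Y) := {p | dist (f p.1) (g p.2) ≤ H} with hRdef
  have hcorr : IsCorrespondence R := by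
    constructor
    · intro x
      obtain ⟨z, hzm, hz⟩ := (isCompact_range hIg.continuous).exists_infDist_eq_dist
        (range_nonempty _) (f x)
      obtain ⟨y, rfl⟩ := hzm
      refine ⟨y, ?_⟩
      have : infDist (f x) (range g) ≤ H := hHd ▸ infDist_le_hausdorffDist_of_mem
        (mem_range_self x) hne
      simpa [hRdef, ← hz] using this
    · intro y
      obtain ⟨z, hzm, hz⟩ := (isCompact_range hIf.continuous).exists_infDist_eq_dist
        (range_nonempty _) (g y)
      obtain ⟨x, rfl⟩ := hzm
      refine ⟨x, ?_⟩
      have hne' : EMetric.hausdorffEdist (range g) (range f) ≠ ⊤ := by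
        exact EMetric.hausdorffEdist_comm.trans_ne hne
      have : infDist (g y) (range f) ≤ H := by
        have := infDist_le_hausdorffDist_of_mem (mem_range_self (f := g) y) hne'
        rwa [hausdorffDist_comm, hHd] at this
      have : dist (f x) (g y) ≤ H := by rw [dist_comm, ← hz]; exact this
      exact this
  have hclosed : IsClosed R := by
    have : Continuous fun p : X × Y => dist (f p.1) (g p.2) :=
      (hIf.continuous.comp continuous_fst).dist (hIg.continuous.comp continuous_snd)
    exact isClosed_le this continuous_const
  refine ⟨R, hcorr, hclosed, ?_⟩
  have hub : distortion R ≤ 2 * H := by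
    refine Real.sSup_le ?_ (by linarith)
    rintro d ⟨p, hp, q, hq, rfl⟩
    have e1 : dist p.1 q.1 = dist (f p.1) (f q.1) := (hIf.dist_eq _ _).symm
    have e2 : dist p.2 q.2 = dist (g p.2) (g q.2) := (hIg.dist_eq _ _).symm
    rw [e1, e2]
    have h1 : dist (f p.1) (g p.2) ≤ H := hp
    have h2 : dist (f q.1) (g q.2) ≤ H := hq
    have := dist_dist_dist_le (f p.1) (f q.1) (g p.2) (g q.2)
    rw [Real.dist_eq] at this
    linarith
  have hlb : H ≤ distortion R / 2 := ghDist_le_distortion_div_two R hcorr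
  linarith
end

section
/- The Gromov–Hausdorff metric on the space of isometry classes of nonempty compact metric spaces is strictly intrinsic: any two compact metric spaces X and Y are joined by a curve in the Gromov–Hausdorff space of length equal to d_GH(X,Y). -/
open GromovHausdorff Set Metric TopologicalSpace
set_option synthInstance.maxHeartbeats 1000000
set_option maxHeartbeats 1000000

noncomputable section GHgeodesicAux

abbrev ghZ : Type := ↥(lp (fun _ : ℕ => ℝ) ⊤)

/-- Auxiliary set: points on segments between close pairs of `A` and `B`. -/
def ghGeoSet (A B : Set ghZ) (r t : ℝ) : Set ghZ :=
  (fun ab : ghZ × ghZ => (1 - t) • ab.1 + t • ab.2) ''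
    {ab : ghZ × ghZ | ab.1 ∈ A ∧ ab.2 ∈ B ∧ dist ab.1 ab.2 ≤ r}

theorem ghGeoSet_isCompact {A B : Set ghZ} (hA : IsCompact A) (hB : IsCompact B) (r t : ℝ) :
    IsCompact (ghGeoSet A B r t) := by
  have h1 : IsCompact {ab : ghZ × ghZ | ab.1 ∈ A ∧ ab.2 ∈ B ∧ dist ab.1 ab.2 ≤ r} := by
    have : {ab : ghZ × ghZ | ab.1 ∈ A ∧ ab.2 ∈ B ∧ dist ab.1 ab.2 ≤ r}
        = (A ×ˢ B) ∩ {ab : ghZ × ghZ | dist ab.1 ab.2 ≤ r} := by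
      ext ab; simp [Set.mem_prod, and_assoc]
    rw [this]
    exact (hA.prod hB).inter_right
      (isClosed_le (by fun_prop) continuous_const)
  exact h1.image (by fun_prop)

theorem ghGeoSet_nonempty {A B : Set ghZ} (hA : A.Nonempty) (hBc : IsCompact B) (hB : B.Nonempty)
    (hd : EMetric.hausdorffEdist A B ≠ ⊤) (t : ℝ) :
    (ghGeoSet A B (hausdorffDist A B) t).Nonempty := by
  obtain ⟨a, ha⟩ := hA
  obtain ⟨b, hb, hab⟩ := hBc.exists_infDist_eq_dist hB a
  refine ⟨(1 - t) • a + t • b, ⟨a, b⟩, ⟨ha, hb, ?_⟩, rfl⟩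
  rw [← hab]
  exact infDist_le_hausdorffDist_of_mem ha hd

theorem ghGeoSet_dist_le {A B : Set ghZ} {r : ℝ} (hr : 0 ≤ r) (s t : ℝ) :
    hausdorffDist (ghGeoSet A B r s) (ghGeoSet A B r t) ≤ |s - t| * r := by
  have key : ∀ u v : ℝ, ∀ x ∈ ghGeoSet A B r u, ∃ y ∈ ghGeoSet A B r v,
      dist x y ≤ |u - v| * r := by
    rintro u v x ⟨⟨a, b⟩, ⟨ha, hb, hab⟩, rfl⟩
    refine ⟨(1 - v) • a + v • b, ⟨⟨a, b⟩, ⟨ha, hb, hab⟩, rfl⟩, ?_⟩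
    have : ((1 - u) • a + u • b) - ((1 - v) • a + v • b) = (v - u) • (a - b) := by
      module
    rw [dist_eq_norm, this, norm_smul, Real.norm_eq_abs, abs_sub_comm v u]
    have hn : ‖a - b‖ ≤ r := by rw [← dist_eq_norm]; exact hab
    exact mul_le_mul_of_nonneg_left hn (abs_nonneg _)
  exact hausdorffDist_le_of_mem_dist (by positivity) (key s t)
    (fun x hx => by simpa [abs_sub_comm] using key t s x hx)

theorem ghGeoSet_zero {A B : Set ghZ} (hAc : IsCompact A) (hBc : IsCompact B) (hB : B.Nonempty)
    (hd : EMetric.hausdorffEdist A B ≠ ⊤) :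
    ghGeoSet A B (hausdorffDist A B) 0 = A := by
  ext z
  constructor
  · rintro ⟨⟨a, b⟩, ⟨ha, _, _⟩, rfl⟩
    simpa using ha
  · intro hz
    obtain ⟨b, hb, hab⟩ := hBc.exists_infDist_eq_dist hB z
    refine ⟨⟨z, b⟩, ⟨hz, hb, ?_⟩, by simp⟩
    rw [← hab]
    exact infDist_le_hausdorffDist_of_mem hz hd

theorem ghGeoSet_one {A B : Set ghZ} (hAc : IsCompact A) (hA : A.Nonempty) (hBc : IsCompact B)
    (hd : EMetric.hausdorffEdist A B ≠ ⊤) :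
    ghGeoSet A B (hausdorffDist A B) 1 = B := by
  ext z
  constructor
  · rintro ⟨⟨a, b⟩, ⟨_, hb, _⟩, rfl⟩
    simpa using hb
  · intro hz
    obtain ⟨a, ha, hab⟩ := hAc.exists_infDist_eq_dist hA z
    refine ⟨⟨a, z⟩, ⟨ha, hz, ?_⟩, by simp⟩
    rw [dist_comm, ← hab, ← hausdorffDist_comm]
    exact infDist_le_hausdorffDist_of_mem hz (by rwa [EMetric.hausdorffEdist_comm])

/-- `toGHSpace` of the range of an isometry from a compact space recovers the space. -/
theorem toGHSpace_range_eq {X : Type*} [MetricSpace X] [CompactSpace X] [Nonempty X]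
    {Φ : X → ghZ} (hΦ : Isometry Φ) (K : NonemptyCompacts ghZ) (hK : (K : Set ghZ) = range Φ) :
    K.toGHSpace = toGHSpace X := by
  have : Nonempty (↥(K : Set ghZ) ≃ᵢ X) := by
    rw [hK]
    exact ⟨hΦ.isometryEquivOnRange.symm⟩
  exact toGHSpace_eq_toGHSpace_iff_isometryEquiv.2 this

end GHgeodesicAux

/-- The Gromov–Hausdorff metric is strictly intrinsic: any two points of the
Gromov–Hausdorff space are joined by a shortest curve (a geodesic) whose length
equals the distance between them. -/
theorem ghSpace_strictly_intrinsic (p q : GromovHausdorff.GHSpace) :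
    ∃ γ : ℝ → GromovHausdorff.GHSpace, γ 0 = p ∧ γ 1 = q ∧
      ∀ s ∈ Icc (0 : ℝ) 1, ∀ t ∈ Icc (0 : ℝ) 1,
        dist (γ s) (γ t) = |s - t| * dist p q := by
  obtain ⟨Φ, Ψ, hΦ, hΨ, hdist⟩ := ghDist_eq_hausdorffDist p.Rep q.Rep
  set A : Set (↥(lp (fun _ : ℕ => ℝ) ⊤)) := range Φ with hA
  set B : Set (↥(lp (fun _ : ℕ => ℝ) ⊤)) := range Ψ with hB
  have hAc : IsCompact A := isCompact_range hΦ.continuous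
  have hBc : IsCompact B := isCompact_range hΨ.continuous
  have hAne : A.Nonempty := range_nonempty _
  have hBne : B.Nonempty := range_nonempty _
  have hfin : EMetric.hausdorffEdist A B ≠ ⊤ :=
    Metric.hausdorffEdist_ne_top_of_nonempty_of_bounded hAne hBne hAc.isBounded hBc.isBounded
  set r : ℝ := hausdorffDist A B with hr
  have hr0 : 0 ≤ r := hausdorffDist_nonneg
  have hpq : dist p q = r := by
    rw [GromovHausdorff.dist_ghDist]; exact hdist
  -- the curve
  set C : ℝ → NonemptyCompacts (↥(lp (fun _ : ℕ => ℝ) ⊤)) := fun t =>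
    ⟨⟨ghGeoSet A B r t, ghGeoSet_isCompact hAc hBc r t⟩,
      ghGeoSet_nonempty hAne hBc hBne hfin t⟩ with hC
  set γ : ℝ → GHSpace := fun t => (C (max 0 (min 1 t))).toGHSpace with hγ
  have hupper : ∀ s t : ℝ, dist (γ s) (γ t)
      ≤ |max 0 (min 1 s) - max 0 (min 1 t)| * r := by
    intro s t
    calc dist (γ s) (γ t) ≤ dist (C (max 0 (min 1 s))) (C (max 0 (min 1 t))) :=
          ghDist_le_nonemptyCompacts_dist _ _
      _ ≤ _ := ghGeoSet_dist_le hr0 _ _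
  have hγ0 : γ 0 = p := by
    have h0 : max 0 (min 1 (0:ℝ)) = 0 := by norm_num
    rw [hγ]; dsimp only
    rw [h0]
    have := toGHSpace_range_eq hΦ (C 0) (ghGeoSet_zero hAc hBc hBne hfin)
    rw [this, GHSpace.toGHSpace_rep]
  have hγ1 : γ 1 = q := by
    have h1 : max 0 (min 1 (1:ℝ)) = 1 := by norm_num
    rw [hγ]; dsimp only
    rw [h1]
    have := toGHSpace_range_eq hΨ (C 1) (ghGeoSet_one hAc hAne hBc hfin)
    rw [this, GHSpace.toGHSpace_rep]
  refine ⟨γ, hγ0, hγ1, ?_⟩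
  -- equality on [0,1]
  have hIcc : ∀ u ∈ Icc (0:ℝ) 1, max 0 (min 1 u) = u := by
    rintro u ⟨h0, h1⟩
    rw [min_eq_right h1, max_eq_right h0]
  have main : ∀ s ∈ Icc (0:ℝ) 1, ∀ t ∈ Icc (0:ℝ) 1, s ≤ t →
      dist (γ s) (γ t) = |s - t| * r := by
    intro s hs t ht hst
    have hub : dist (γ s) (γ t) ≤ |s - t| * r := by
      have := hupper s t
      rwa [hIcc s hs, hIcc t ht] at this
    have h0s : dist p (γ s) ≤ s * r := by
      have := hupper 0 s
      rw [hIcc 0 (by norm_num), hIcc s hs, hγ0] at this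
      simpa [abs_of_nonneg hs.1] using this
    have ht1 : dist (γ t) q ≤ (1 - t) * r := by
      have := hupper t 1
      rw [hIcc 1 (by norm_num), hIcc t ht, hγ1] at this
      simpa [abs_of_nonpos (by linarith [ht.2] : t - 1 ≤ 0)] using this
    have hlb : (t - s) * r ≤ dist (γ s) (γ t) := by
      have htri : dist p q ≤ dist p (γ s) + dist (γ s) (γ t) + dist (γ t) q :=
        dist_triangle4 p (γ s) (γ t) q
      rw [hpq] at htri
      nlinarith [dist_nonneg (α := GHSpace) (x := γ s) (y := γ t)]
    have habs : |s - t| = t - s := by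
      rw [abs_sub_comm, abs_of_nonneg (by linarith)]
    rw [habs]
    rw [habs] at hub
    linarith
  intro s hs t ht
  rcases le_total s t with h | h
  · rw [hpq]; exact main s hs t ht h
  · rw [hpq, dist_comm, abs_sub_comm]; exact main t ht s hs h
end

section
/- Every closed ball in the Gromov–Hausdorff space centered at the one-point metric space is convex in the weak sense: for any compact metric spaces X, Y with d_GH(Δ₁,X) ≤ r and d_GH(Δ₁,Y) ≤ r, there exists a geodesic γ: [0,1] → 𝓜 from X to Y (i.e., d_GH(γ(s),γ(t)) = |s−t|·d_GH(X,Y)) with d_GH(Δ₁, γ(t)) ≤ r for all t. -/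
open GromovHausdorff Set Metric

namespace GHGeo

variable (X : Type*) (Y : Type*) [MetricSpace X] [CompactSpace X] [Nonempty X]
  [MetricSpace Y] [CompactSpace Y] [Nonempty Y]

/-- The correspondence between `X` and `Y` coming from the optimal coupling. -/
def ghCorr : Set (X × Y) :=
  {p | dist (optimalGHInjl X Y p.1) (optimalGHInjr X Y p.2) ≤ ghDist X Y}

lemma ghDist_nonneg' : 0 ≤ ghDist X Y := by
  rw [ghDist]; exact dist_nonneg

lemma corr_total_left (x : X) : ∃ y : Y, (x, y) ∈ ghCorr X Y := by
  have hc : IsCompact (range (optimalGHInjr X Y)) :=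
    isCompact_range (isometry_optimalGHInjr X Y).continuous
  obtain ⟨z, hz, hdz⟩ := hc.exists_infDist_eq_dist (range_nonempty _) (optimalGHInjl X Y x)
  obtain ⟨y, rfl⟩ := hz
  refine ⟨y, ?_⟩
  have hne : EMetric.hausdorffEdist (range (optimalGHInjl X Y)) (range (optimalGHInjr X Y)) ≠ ⊤ :=
    hausdorffEdist_ne_top_of_nonempty_of_bounded (range_nonempty _) (range_nonempty _)
      (isCompact_range (isometry_optimalGHInjl X Y).continuous).isBounded hc.isBounded
  have h1 : infDist (optimalGHInjl X Y x) (range (optimalGHInjr X Y)) ≤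
      hausdorffDist (range (optimalGHInjl X Y)) (range (optimalGHInjr X Y)) :=
    infDist_le_hausdorffDist_of_mem (mem_range_self x) hne
  rw [hausdorffDist_optimal] at h1
  show dist (optimalGHInjl X Y x) (optimalGHInjr X Y y) ≤ ghDist X Y
  rw [← hdz]
  exact h1

lemma corr_total_right (y : Y) : ∃ x : X, (x, y) ∈ ghCorr X Y := by
  have hc : IsCompact (range (optimalGHInjl X Y)) :=
    isCompact_range (isometry_optimalGHInjl X Y).continuous
  obtain ⟨z, hz, hdz⟩ := hc.exists_infDist_eq_dist (range_nonempty _) (optimalGHInjr X Y y)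
  obtain ⟨x, rfl⟩ := hz
  refine ⟨x, ?_⟩
  have hne : EMetric.hausdorffEdist (range (optimalGHInjr X Y)) (range (optimalGHInjl X Y)) ≠ ⊤ :=
    hausdorffEdist_ne_top_of_nonempty_of_bounded (range_nonempty _) (range_nonempty _)
      (isCompact_range (isometry_optimalGHInjr X Y).continuous).isBounded hc.isBounded
  have h1 : infDist (optimalGHInjr X Y y) (range (optimalGHInjl X Y)) ≤
      hausdorffDist (range (optimalGHInjr X Y)) (range (optimalGHInjl X Y)) :=
    infDist_le_hausdorffDist_of_mem (mem_range_self y) hne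
  rw [hausdorffDist_comm, hausdorffDist_optimal] at h1
  show dist (optimalGHInjl X Y x) (optimalGHInjr X Y y) ≤ ghDist X Y
  rw [dist_comm, ← hdz]
  exact h1

lemma corr_dist {p q : X × Y} (hp : p ∈ ghCorr X Y) (hq : q ∈ ghCorr X Y) :
    |dist p.1 q.1 - dist p.2 q.2| ≤ 2 * ghDist X Y := by
  have h1 : dist p.1 q.1 = dist (optimalGHInjl X Y p.1) (optimalGHInjl X Y q.1) :=
    ((isometry_optimalGHInjl X Y).dist_eq _ _).symm
  have h2 : dist p.2 q.2 = dist (optimalGHInjr X Y p.2) (optimalGHInjr X Y q.2) :=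
    ((isometry_optimalGHInjr X Y).dist_eq _ _).symm
  have hp' : dist (optimalGHInjl X Y p.1) (optimalGHInjr X Y p.2) ≤ ghDist X Y := hp
  have hq' : dist (optimalGHInjl X Y q.1) (optimalGHInjr X Y q.2) ≤ ghDist X Y := hq
  have t1 : dist (optimalGHInjl X Y p.1) (optimalGHInjl X Y q.1) ≤
      dist (optimalGHInjl X Y p.1) (optimalGHInjr X Y p.2) +
      dist (optimalGHInjr X Y p.2) (optimalGHInjr X Y q.2) +
      dist (optimalGHInjr X Y q.2) (optimalGHInjl X Y q.1) := dist_triangle4 _ _ _ _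
  have t2 : dist (optimalGHInjr X Y p.2) (optimalGHInjr X Y q.2) ≤
      dist (optimalGHInjr X Y p.2) (optimalGHInjl X Y p.1) +
      dist (optimalGHInjl X Y p.1) (optimalGHInjl X Y q.1) +
      dist (optimalGHInjl X Y q.1) (optimalGHInjr X Y q.2) := dist_triangle4 _ _ _ _
  have e1 : dist (optimalGHInjr X Y q.2) (optimalGHInjl X Y q.1)
      = dist (optimalGHInjl X Y q.1) (optimalGHInjr X Y q.2) := dist_comm _ _
  have e2 : dist (optimalGHInjr X Y p.2) (optimalGHInjl X Y p.1)
      = dist (optimalGHInjl X Y p.1) (optimalGHInjr X Y p.2) := dist_comm _ _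
  rw [abs_sub_le_iff]
  constructor <;> rw [h1, h2] <;> linarith

lemma ghCorr_isClosed : IsClosed (ghCorr X Y) := by
  apply isClosed_le _ continuous_const
  exact ((isometry_optimalGHInjl X Y).continuous.comp continuous_fst).dist
    ((isometry_optimalGHInjr X Y).continuous.comp continuous_snd)

lemma ghCorr_nonempty : (ghCorr X Y).Nonempty := by
  obtain ⟨x⟩ := ‹Nonempty X›
  obtain ⟨y, hy⟩ := corr_total_left X Y x
  exact ⟨(x, y), hy⟩

/-- the clamped parameter -/
noncomputable def cl (t : ℝ) : ℝ := if 0 < t ∧ t < 1 then t else 1/2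

lemma cl_pos (t : ℝ) : 0 < cl t := by
  rw [cl]; split <;> [exact (by assumption : 0 < t ∧ t < 1).1; norm_num]

lemma cl_lt_one (t : ℝ) : cl t < 1 := by
  rw [cl]; split <;> [exact (by assumption : 0 < t ∧ t < 1).2; norm_num]

lemma cl_of_mem {t : ℝ} (h1 : 0 < t) (h2 : t < 1) : cl t = t := if_pos ⟨h1, h2⟩

/-- Interpolating space at parameter `t` -/
def GeoAux (_t : ℝ) : Type _ := {p : X × Y // p ∈ ghCorr X Y}

variable {X Y} in
def GeoAux.p {t : ℝ} (z : GeoAux X Y t) : X × Y := Subtype.val z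

variable {X Y} in
lemma GeoAux.mem {t : ℝ} (z : GeoAux X Y t) : z.p ∈ ghCorr X Y := Subtype.prop z

variable {X Y} in
def GeoAux.mk' (t : ℝ) (p : X × Y) (h : p ∈ ghCorr X Y) : GeoAux X Y t := ⟨p, h⟩

variable {X Y} in
lemma GeoAux.p_mk' (t : ℝ) (p : X × Y) (h : p ∈ ghCorr X Y) : (GeoAux.mk' t p h).p = p := rfl

noncomputable instance (t : ℝ) : MetricSpace (GeoAux X Y t) where
  dist z w := (1 - cl t) * dist z.p.1 w.p.1 + cl t * dist z.p.2 w.p.2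
  dist_self z := by simp
  dist_comm z w := by simp [dist_comm]
  dist_triangle z w v := by
    show (1 - cl t) * dist z.p.1 v.p.1 + cl t * dist z.p.2 v.p.2 ≤
      ((1 - cl t) * dist z.p.1 w.p.1 + cl t * dist z.p.2 w.p.2) +
      ((1 - cl t) * dist w.p.1 v.p.1 + cl t * dist w.p.2 v.p.2)
    have h1 := dist_triangle z.p.1 w.p.1 v.p.1
    have h2 := dist_triangle z.p.2 w.p.2 v.p.2
    have c1 : 0 < cl t := cl_pos t
    have c2 : cl t < 1 := cl_lt_one t
    nlinarith
  eq_of_dist_eq_zero := by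
    intro z w h
    have h' : (1 - cl t) * dist z.p.1 w.p.1 + cl t * dist z.p.2 w.p.2 = 0 := h
    have c1 : 0 < cl t := cl_pos t
    have c2 : cl t < 1 := cl_lt_one t
    have d1 : (0:ℝ) ≤ dist z.p.1 w.p.1 := dist_nonneg
    have d2 : (0:ℝ) ≤ dist z.p.2 w.p.2 := dist_nonneg
    have e1 : dist z.p.1 w.p.1 = 0 := by nlinarith
    have e2 : dist z.p.2 w.p.2 = 0 := by nlinarith
    have : z.p = w.p := Prod.ext (dist_eq_zero.1 e1) (dist_eq_zero.1 e2)
    exact Subtype.ext this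

variable {X Y} in
lemma geoAux_dist {t : ℝ} (z w : GeoAux X Y t) :
    dist z w = (1 - cl t) * dist z.p.1 w.p.1 + cl t * dist z.p.2 w.p.2 := rfl

instance (t : ℝ) : Nonempty (GeoAux X Y t) := by
  obtain ⟨p, hp⟩ := ghCorr_nonempty X Y
  exact ⟨GeoAux.mk' t p hp⟩

instance (t : ℝ) : CompactSpace (GeoAux X Y t) := by
  haveI : CompactSpace {p : X × Y // p ∈ ghCorr X Y} :=
    isCompact_iff_compactSpace.mp ((ghCorr_isClosed X Y).isCompact)
  let ι : {p : X × Y // p ∈ ghCorr X Y} → GeoAux X Y t := fun p => GeoAux.mk' t p.1 p.2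
  have hlip : LipschitzWith 1 ι := by
    apply LipschitzWith.of_dist_le_mul
    intro p q
    have hd : dist p q = max (dist p.1.1 q.1.1) (dist p.1.2 q.1.2) := by
      rw [Subtype.dist_eq, Prod.dist_eq]
    rw [geoAux_dist, hd]
    have c1 : 0 < cl t := cl_pos t
    have c2 : cl t < 1 := cl_lt_one t
    have m1 : dist p.1.1 q.1.1 ≤ max (dist p.1.1 q.1.1) (dist p.1.2 q.1.2) := le_max_left _ _
    have m2 : dist p.1.2 q.1.2 ≤ max (dist p.1.1 q.1.1) (dist p.1.2 q.1.2) := le_max_right _ _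
    have hp : (ι p).p = p.1 := rfl
    have hq : (ι q).p = q.1 := rfl
    rw [hp, hq]
    push_cast
    have k1 := mul_le_mul_of_nonneg_left m1 (by linarith : (0:ℝ) ≤ 1 - cl t)
    have k2 := mul_le_mul_of_nonneg_left m2 c1.le
    linarith
  have hsurj : Function.Surjective ι := fun z => ⟨⟨z.p, z.mem⟩, rfl⟩
  refine ⟨?_⟩
  have : (univ : Set (GeoAux X Y t)) = range ι := hsurj.range_eq.symm
  rw [this]
  exact isCompact_range hlip.continuous

lemma ghDist_geoAux_left (t : ℝ) : ghDist (GeoAux X Y t) X ≤ cl t * ghDist X Y := by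
  have hD : 0 ≤ ghDist X Y := ghDist_nonneg' X Y
  have c1 : 0 < cl t := cl_pos t
  have c2 : cl t < 1 := cl_lt_one t
  have main : ghDist (GeoAux X Y t) X ≤ 0 + 2 * (cl t * ghDist X Y) / 2 + 0 := by
    refine ghDist_le_of_approx_subsets
      (s := (univ : Set (GeoAux X Y t))) (fun z => z.1.p.1) ?_ ?_ ?_
    · intro z; exact ⟨z, mem_univ _, by simp⟩
    · intro x
      obtain ⟨y, hy⟩ := corr_total_left X Y x
      exact ⟨⟨GeoAux.mk' t (x, y) hy, mem_univ _⟩, by simp [GeoAux.p_mk']⟩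
    · intro z w
      rw [Subtype.dist_eq, geoAux_dist]
      have hd := corr_dist X Y z.1.mem w.1.mem
      rw [show (1 - cl t) * dist z.1.p.1 w.1.p.1 + cl t * dist z.1.p.2 w.1.p.2
          - dist z.1.p.1 w.1.p.1 = cl t * (dist z.1.p.2 w.1.p.2 - dist z.1.p.1 w.1.p.1) by ring,
        abs_mul, abs_of_pos c1, abs_sub_comm]
      calc cl t * |dist z.1.p.1 w.1.p.1 - dist z.1.p.2 w.1.p.2|
          ≤ cl t * (2 * ghDist X Y) := by
            exact mul_le_mul_of_nonneg_left hd c1.le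
        _ = 2 * (cl t * ghDist X Y) := by ring
  linarith

lemma ghDist_geoAux_right (t : ℝ) : ghDist (GeoAux X Y t) Y ≤ (1 - cl t) * ghDist X Y := by
  have hD : 0 ≤ ghDist X Y := ghDist_nonneg' X Y
  have c1 : 0 < cl t := cl_pos t
  have c2 : cl t < 1 := cl_lt_one t
  have main : ghDist (GeoAux X Y t) Y ≤ 0 + 2 * ((1 - cl t) * ghDist X Y) / 2 + 0 := by
    refine ghDist_le_of_approx_subsets
      (s := (univ : Set (GeoAux X Y t))) (fun z => z.1.p.2) ?_ ?_ ?_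
    · intro z; exact ⟨z, mem_univ _, by simp⟩
    · intro y
      obtain ⟨x, hx⟩ := corr_total_right X Y y
      exact ⟨⟨GeoAux.mk' t (x, y) hx, mem_univ _⟩, by simp [GeoAux.p_mk']⟩
    · intro z w
      rw [Subtype.dist_eq, geoAux_dist]
      have hd := corr_dist X Y z.1.mem w.1.mem
      rw [show (1 - cl t) * dist z.1.p.1 w.1.p.1 + cl t * dist z.1.p.2 w.1.p.2
          - dist z.1.p.2 w.1.p.2 = (1 - cl t) * (dist z.1.p.1 w.1.p.1 - dist z.1.p.2 w.1.p.2)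
          by ring, abs_mul, abs_of_pos (by linarith : (0:ℝ) < 1 - cl t)]
      calc (1 - cl t) * |dist z.1.p.1 w.1.p.1 - dist z.1.p.2 w.1.p.2|
          ≤ (1 - cl t) * (2 * ghDist X Y) :=
            mul_le_mul_of_nonneg_left hd (by linarith)
        _ = 2 * ((1 - cl t) * ghDist X Y) := by ring
  linarith

variable {X Y} in
def GeoAux.retime (s t : ℝ) (z : GeoAux X Y s) : GeoAux X Y t := z

lemma ghDist_geoAux_mid (s t : ℝ) :
    ghDist (GeoAux X Y s) (GeoAux X Y t) ≤ |cl s - cl t| * ghDist X Y := by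
  have hD : 0 ≤ ghDist X Y := ghDist_nonneg' X Y
  have main : ghDist (GeoAux X Y s) (GeoAux X Y t) ≤
      0 + 2 * (|cl s - cl t| * ghDist X Y) / 2 + 0 := by
    refine ghDist_le_of_approx_subsets
      (s := (univ : Set (GeoAux X Y s))) (fun z => GeoAux.retime s t z.1) ?_ ?_ ?_
    · intro z; exact ⟨z, mem_univ _, by simp⟩
    · intro w
      exact ⟨⟨GeoAux.retime t s w, mem_univ _⟩, le_of_eq (dist_self w)⟩
    · intro z w
      rw [Subtype.dist_eq, geoAux_dist]
      have hd := corr_dist X Y z.1.mem w.1.mem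
      have hp1 : (GeoAux.retime s t z.1).p = z.1.p := rfl
      have hp2 : (GeoAux.retime s t w.1).p = w.1.p := rfl
      rw [geoAux_dist, hp1, hp2]
      rw [show (1 - cl s) * dist z.1.p.1 w.1.p.1 + cl s * dist z.1.p.2 w.1.p.2
          - ((1 - cl t) * dist z.1.p.1 w.1.p.1 + cl t * dist z.1.p.2 w.1.p.2)
          = (cl s - cl t) * (dist z.1.p.2 w.1.p.2 - dist z.1.p.1 w.1.p.1) by ring,
        abs_mul, abs_sub_comm (dist z.1.p.2 w.1.p.2)]
      calc |cl s - cl t| * |dist z.1.p.1 w.1.p.1 - dist z.1.p.2 w.1.p.2|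
          ≤ |cl s - cl t| * (2 * ghDist X Y) :=
            mul_le_mul_of_nonneg_left hd (abs_nonneg _)
        _ = 2 * (|cl s - cl t| * ghDist X Y) := by ring
  linarith

lemma dist_le_of_ghDist_punit {r : ℝ} (h : ghDist PUnit X ≤ r) (x x' : X) :
    dist x x' ≤ 2 * r := by
  obtain ⟨Φ, Ψ, hΦ, hΨ, hD⟩ := ghDist_eq_hausdorffDist PUnit X
  have hne : EMetric.hausdorffEdist (range Ψ) (range Φ) ≠ ⊤ :=
    hausdorffEdist_ne_top_of_nonempty_of_bounded (range_nonempty _) (range_nonempty _)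
      (isCompact_range hΨ.continuous).isBounded (isCompact_range hΦ.continuous).isBounded
  have key : ∀ z : X, dist (Ψ z) (Φ PUnit.unit) ≤ r := by
    intro z
    have h1 : infDist (Ψ z) (range Φ) ≤ hausdorffDist (range Ψ) (range Φ) :=
      infDist_le_hausdorffDist_of_mem (mem_range_self z) hne
    rw [hausdorffDist_comm, ← hD] at h1
    rw [Set.range_unique (f := Φ), infDist_singleton] at h1
    exact le_trans h1 h
  calc dist x x' = dist (Ψ x) (Ψ x') := (hΨ.dist_eq _ _).symm
    _ ≤ dist (Ψ x) (Φ PUnit.unit) + dist (Φ PUnit.unit) (Ψ x') := dist_triangle _ _ _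
    _ ≤ r + r := add_le_add (key x) (by rw [dist_comm]; exact key x')
    _ = 2 * r := by ring

lemma ghDist_geoAux_punit {r : ℝ} (hr : 0 ≤ r)
    (hX : ghDist PUnit X ≤ r) (hY : ghDist PUnit Y ≤ r) (t : ℝ) :
    ghDist (GeoAux X Y t) PUnit ≤ r := by
  have hbX := dist_le_of_ghDist_punit X hX
  have hbY := dist_le_of_ghDist_punit Y hY
  have c1 : 0 < cl t := cl_pos t
  have c2 : cl t < 1 := cl_lt_one t
  have main : ghDist (GeoAux X Y t) PUnit ≤ 0 + 2 * r / 2 + 0 := by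
    refine ghDist_le_of_approx_subsets
      (s := (univ : Set (GeoAux X Y t))) (fun _ => PUnit.unit) ?_ ?_ ?_
    · intro z; exact ⟨z, mem_univ _, by simp⟩
    · intro u
      obtain ⟨z⟩ := (inferInstance : Nonempty (GeoAux X Y t))
      refine ⟨⟨z, mem_univ _⟩, ?_⟩
      rw [Subsingleton.elim u PUnit.unit, dist_self]
    · intro z w
      have hpu : dist (PUnit.unit) (PUnit.unit) = 0 := dist_self _
      have n1 : (0:ℝ) ≤ dist z.1.p.1 w.1.p.1 := dist_nonneg
      have n2 : (0:ℝ) ≤ dist z.1.p.2 w.1.p.2 := dist_nonneg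
      rw [Subtype.dist_eq, geoAux_dist, hpu, sub_zero]
      rw [abs_of_nonneg (by nlinarith)]
      have b1 : dist z.1.p.1 w.1.p.1 ≤ 2 * r := hbX _ _
      have b2 : dist z.1.p.2 w.1.p.2 ≤ 2 * r := hbY _ _
      nlinarith
  linarith

lemma toGHSpace_punit_eq : toGHSpace PUnit.{u+1} = toGHSpace PUnit.{v+1} := by
  rw [toGHSpace_eq_toGHSpace_iff_isometryEquiv]
  exact ⟨{ toEquiv := Equiv.punitEquivPUnit,
           isometry_toFun := fun x y => by
             rw [Subsingleton.elim x y]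
             simp }⟩

variable {X} in
lemma ghDist_punit_congr {r : ℝ} (h : ghDist PUnit.{u+1} X ≤ r) :
    ghDist PUnit.{v+1} X ≤ r := by
  rw [ghDist, toGHSpace_punit_eq.{v, u}]
  exact h

end GHGeo

open GHGeo

/-- Any closed ball centered at the one-point space in the Gromov–Hausdorff space is
convex in the weak sense. -/
theorem ball_at_onePoint_weakly_convex (r : ℝ) (hr : 0 < r)
    (X Y : Type*) [MetricSpace X] [CompactSpace X] [Nonempty X]
    [MetricSpace Y] [CompactSpace Y] [Nonempty Y]
    (hX : GromovHausdorff.ghDist PUnit X ≤ r) (hY : GromovHausdorff.ghDist PUnit Y ≤ r) :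
    ∃ γ : ℝ → GromovHausdorff.GHSpace,
      γ 0 = GromovHausdorff.toGHSpace X ∧ γ 1 = GromovHausdorff.toGHSpace Y ∧
      (∀ s ∈ Icc (0 : ℝ) 1, ∀ t ∈ Icc (0 : ℝ) 1,
        dist (γ s) (γ t) = |s - t| * GromovHausdorff.ghDist X Y) ∧
      (∀ t ∈ Icc (0 : ℝ) 1, dist (GromovHausdorff.toGHSpace PUnit) (γ t) ≤ r) := by
  classical
  set D := ghDist X Y with hDdef
  have hD : 0 ≤ D := ghDist_nonneg' X Y
  set γ : ℝ → GHSpace := fun t =>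
    if t ≤ 0 then toGHSpace X else if 1 ≤ t then toGHSpace Y else toGHSpace (GeoAux X Y t)
    with hγ
  have hγ0 : γ 0 = toGHSpace X := by simp [hγ]
  have hγ1 : γ 1 = toGHSpace Y := by norm_num [hγ]
  have hγmid : ∀ t : ℝ, 0 < t → t < 1 → γ t = toGHSpace (GeoAux X Y t) := by
    intro t h1 h2
    simp only [hγ, if_neg (not_le.2 h1), if_neg (not_le.2 h2)]
  have hdistXY : dist (toGHSpace X) (toGHSpace Y) = D := rfl
  -- Claim A
  have A : ∀ t ∈ Icc (0:ℝ) 1, dist (toGHSpace X) (γ t) ≤ t * D := by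
    rintro t ⟨ht0, ht1⟩
    rcases eq_or_lt_of_le ht0 with h | h
    · rw [← h, hγ0]; simp
    rcases eq_or_lt_of_le ht1 with h' | h'
    · rw [h', hγ1, hdistXY]; nlinarith
    rw [hγmid t h h', dist_comm]
    have := ghDist_geoAux_left X Y t
    rw [cl_of_mem h h'] at this
    exact this
  -- Claim B
  have B : ∀ t ∈ Icc (0:ℝ) 1, dist (γ t) (toGHSpace Y) ≤ (1 - t) * D := by
    rintro t ⟨ht0, ht1⟩
    rcases eq_or_lt_of_le ht0 with h | h
    · rw [← h, hγ0, hdistXY]; nlinarith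
    rcases eq_or_lt_of_le ht1 with h' | h'
    · rw [h', hγ1]; simp
    rw [hγmid t h h']
    have := ghDist_geoAux_right X Y t
    rw [cl_of_mem h h'] at this
    exact this
  -- Claim C : upper bound
  have C : ∀ s ∈ Icc (0:ℝ) 1, ∀ t ∈ Icc (0:ℝ) 1, dist (γ s) (γ t) ≤ |s - t| * D := by
    rintro s ⟨hs0, hs1⟩ t ⟨ht0, ht1⟩
    rcases eq_or_lt_of_le hs0 with h | h
    · obtain rfl : s = 0 := h.symm
      rw [hγ0, zero_sub, abs_neg, abs_of_nonneg ht0]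
      exact A t ⟨ht0, ht1⟩
    rcases eq_or_lt_of_le hs1 with h' | h'
    · obtain rfl : s = 1 := h'
      rw [hγ1, dist_comm, abs_of_nonneg (by linarith : (0:ℝ) ≤ 1 - t)]
      exact B t ⟨ht0, ht1⟩
    rcases eq_or_lt_of_le ht0 with h2 | h2
    · obtain rfl : t = 0 := h2.symm
      rw [hγ0, dist_comm, sub_zero, abs_of_nonneg hs0]
      exact A s ⟨hs0, hs1⟩
    rcases eq_or_lt_of_le ht1 with h3 | h3
    · obtain rfl : t = 1 := h3
      rw [hγ1, abs_of_nonpos (by linarith : s - 1 ≤ 0), neg_sub]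
      exact B s ⟨hs0, hs1⟩
    rw [hγmid s h h', hγmid t h2 h3]
    have hm := ghDist_geoAux_mid X Y s t
    rw [cl_of_mem h h', cl_of_mem h2 h3] at hm
    exact hm
  refine ⟨γ, hγ0, hγ1, ?_, ?_⟩
  · intro s hs t ht
    apply le_antisymm (C s hs t ht)
    rcases le_total s t with hst | hst
    · have key : D ≤ s * D + dist (γ s) (γ t) + (1 - t) * D := by
        calc D = dist (toGHSpace X) (toGHSpace Y) := hdistXY.symm
          _ ≤ dist (toGHSpace X) (γ s) + dist (γ s) (γ t) + dist (γ t) (toGHSpace Y) :=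
              dist_triangle4 _ _ _ _
          _ ≤ s * D + dist (γ s) (γ t) + (1 - t) * D :=
              add_le_add (add_le_add (A s hs) le_rfl) (B t ht)
      rw [abs_of_nonpos (by linarith : s - t ≤ 0), neg_sub]
      linarith
    · have key : D ≤ t * D + dist (γ t) (γ s) + (1 - s) * D := by
        calc D = dist (toGHSpace X) (toGHSpace Y) := hdistXY.symm
          _ ≤ dist (toGHSpace X) (γ t) + dist (γ t) (γ s) + dist (γ s) (toGHSpace Y) :=
              dist_triangle4 _ _ _ _
          _ ≤ t * D + dist (γ t) (γ s) + (1 - s) * D :=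
              add_le_add (add_le_add (A t ht) le_rfl) (B s hs)
      rw [abs_of_nonneg (by linarith : (0:ℝ) ≤ s - t)]
      have hcomm : dist (γ t) (γ s) = dist (γ s) (γ t) := dist_comm _ _
      linarith
  · rintro t ⟨ht0, ht1⟩
    rcases eq_or_lt_of_le ht0 with h | h
    · obtain rfl : t = 0 := h.symm
      rw [hγ0]
      exact ghDist_punit_congr hX
    rcases eq_or_lt_of_le ht1 with h' | h'
    · obtain rfl : t = 1 := h'
      rw [hγ1]
      exact ghDist_punit_congr hY
    rw [hγmid t h h', dist_comm]
    exact ghDist_geoAux_punit X Y hr.le hX hY t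
end

section
/- Let A = [0, 2r] ⊂ ℝ and B = {0, 2r} ⊂ ℝ with the induced metric, r > 0. Then the Gromov–Hausdorff distance between A and B equals r. -/
open GromovHausdorff Set Metric

set_option maxHeartbeats 1000000

lemma aux_hd {r : ℝ} (hr : 0 < r) :
    hausdorffDist (Set.Icc (0:ℝ) (2*r)) ({0, 2*r} : Set ℝ) ≤ r := by
  have h0 : (0:ℝ) ∈ ({0, 2*r} : Set ℝ) := by simp
  have h2 : (2*r:ℝ) ∈ ({0, 2*r} : Set ℝ) := by simp
  refine hausdorffDist_le_of_infDist hr.le ?_ ?_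
  · intro x hx
    rcases le_or_gt x r with h' | h'
    · have h := infDist_le_dist_of_mem (x := x) h0
      rw [Real.dist_eq, abs_of_nonneg (by linarith [hx.1] : (0:ℝ) ≤ x - 0)] at h
      linarith
    · have h := infDist_le_dist_of_mem (x := x) h2
      rw [Real.dist_eq, abs_of_nonpos (by linarith [hx.2] : x - 2*r ≤ 0)] at h
      linarith
  · intro x hx
    have hx' : x ∈ Set.Icc (0 : ℝ) (2 * r) := by
      rcases hx with rfl | hx
      · constructor <;> nlinarith
      · rw [mem_singleton_iff] at hx; subst hx; constructor <;> nlinarith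
    rw [infDist_zero_of_mem hx']
    exact hr.le

lemma aux_ghlower {Z : Type*} [MetricSpace Z] {r : ℝ} (hr : 0 < r)
    {Φ : ↥(Set.Icc (0 : ℝ) (2 * r)) → Z} {Ψ : ↥({0, 2 * r} : Set ℝ) → Z}
    (hΦ : Isometry Φ) (hΨ : Isometry Ψ) :
    r ≤ hausdorffDist (range Φ) (range Ψ) := by
  have h0A : (0 : ℝ) ∈ Set.Icc (0 : ℝ) (2 * r) := by constructor <;> nlinarith
  have h0B : (0 : ℝ) ∈ ({0, 2 * r} : Set ℝ) := by simp
  have h2B : (2 * r : ℝ) ∈ ({0, 2 * r} : Set ℝ) := by simp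
  haveI : Nonempty ↥(Set.Icc (0 : ℝ) (2 * r)) := ⟨⟨0, h0A⟩⟩
  haveI : Nonempty ↥({0, 2 * r} : Set ℝ) := ⟨⟨0, h0B⟩⟩
  haveI : CompactSpace ↥(Set.Icc (0 : ℝ) (2 * r)) :=
    isCompact_iff_compactSpace.mp isCompact_Icc
  haveI : CompactSpace ↥({0, 2 * r} : Set ℝ) :=
    isCompact_iff_compactSpace.mp ((Set.toFinite ({0, 2 * r} : Set ℝ)).isCompact)
  haveI : PreconnectedSpace ↥(Set.Icc (0 : ℝ) (2 * r)) :=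
    Subtype.preconnectedSpace isPreconnected_Icc
  set p := Ψ ⟨0, h0B⟩ with hp
  set q := Ψ ⟨2 * r, h2B⟩ with hq
  have hpq : dist p q = 2 * r := by
    rw [hp, hq, hΨ.dist_eq, Subtype.dist_eq, Real.dist_eq, abs_of_nonpos] <;> simp <;> linarith
  have hsum : ∀ a, 2 * r ≤ dist (Φ a) p + dist (Φ a) q := by
    intro a
    calc 2 * r = dist p q := hpq.symm
    _ ≤ dist p (Φ a) + dist (Φ a) q := dist_triangle _ _ _
    _ = dist (Φ a) p + dist (Φ a) q := by rw [dist_comm p (Φ a)]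
  have hrangeΨ : range Ψ = {p, q} := by
    ext z
    constructor
    · rintro ⟨⟨x, hx⟩, rfl⟩
      rcases hx with h | h
      · left; rw [hp]; exact congrArg Ψ (Subtype.ext h)
      · right; rw [hq]; exact congrArg Ψ (Subtype.ext h)
    · rintro (rfl | rfl)
      · exact ⟨_, rfl⟩
      · exact ⟨_, rfl⟩
  have hedist : EMetric.hausdorffEdist (range Φ) (range Ψ) ≠ ⊤ :=
    hausdorffEdist_ne_top_of_nonempty_of_bounded (range_nonempty _) (range_nonempty _)
      (isCompact_range hΦ.continuous).isBounded (isCompact_range hΨ.continuous).isBounded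
  by_cases hcase : ∃ a, dist (Φ a) p = dist (Φ a) q
  · obtain ⟨a, ha⟩ := hcase
    have h1 : r ≤ dist (Φ a) p := by have := hsum a; linarith
    have h2 : r ≤ infDist (Φ a) (range Ψ) := by
      rw [hrangeΨ, ← not_lt, infDist_lt_iff ⟨p, mem_insert _ _⟩]
      rintro ⟨y, hy, hlt⟩
      rcases hy with rfl | hy
      · linarith
      · rw [mem_singleton_iff] at hy; subst hy; rw [← ha] at hlt; linarith
    exact h2.trans (infDist_le_hausdorffDist_of_mem ⟨a, rfl⟩ hedist)
  · push_neg at hcase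
    have hsign : (∀ a, dist (Φ a) p < dist (Φ a) q) ∨ (∀ a, dist (Φ a) q < dist (Φ a) p) := by
      by_contra hx
      push_neg at hx
      obtain ⟨⟨a1, h1⟩, ⟨a2, h2⟩⟩ := hx
      obtain ⟨a, ha⟩ := intermediate_value_univ₂ (hΦ.continuous.dist continuous_const)
        (hΦ.continuous.dist continuous_const) h2 h1
      exact hcase a ha
    have key : ∃ z ∈ range Ψ, r ≤ infDist z (range Φ) := by
      rcases hsign with h | h
      · refine ⟨q, ⟨_, rfl⟩, ?_⟩
        rw [← not_lt, infDist_lt_iff (range_nonempty _)]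
        rintro ⟨y, ⟨a, rfl⟩, hlt⟩
        rw [dist_comm] at hlt
        have := hsum a; have := h a; linarith
      · refine ⟨p, ⟨_, rfl⟩, ?_⟩
        rw [← not_lt, infDist_lt_iff (range_nonempty _)]
        rintro ⟨y, ⟨a, rfl⟩, hlt⟩
        rw [dist_comm] at hlt
        have := hsum a; have := h a; linarith
    obtain ⟨z, hz, hzr⟩ := key
    calc r ≤ infDist z (range Φ) := hzr
    _ ≤ hausdorffDist (range Ψ) (range Φ) :=
        infDist_le_hausdorffDist_of_mem hz (by rwa [EMetric.hausdorffEdist_comm])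
    _ = hausdorffDist (range Φ) (range Ψ) := hausdorffDist_comm

theorem ghDist_Icc_pair (r : ℝ) (hr : 0 < r) :
    @GromovHausdorff.ghDist ↥(Set.Icc (0 : ℝ) (2 * r)) ↥({0, 2 * r} : Set ℝ) _
      (Set.Nonempty.to_subtype ⟨0, by constructor <;> nlinarith⟩)
      (isCompact_iff_compactSpace.mp isCompact_Icc) _
      (Set.Nonempty.to_subtype ⟨0, by simp⟩)
      (isCompact_iff_compactSpace.mp ((Set.toFinite ({0, 2 * r} : Set ℝ)).isCompact)) = r := by
  haveI : Nonempty ↥(Set.Icc (0 : ℝ) (2 * r)) :=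
    Set.Nonempty.to_subtype ⟨0, by constructor <;> nlinarith⟩
  haveI : Nonempty ↥({0, 2 * r} : Set ℝ) := Set.Nonempty.to_subtype ⟨0, by simp⟩
  haveI : CompactSpace ↥(Set.Icc (0 : ℝ) (2 * r)) :=
    isCompact_iff_compactSpace.mp isCompact_Icc
  haveI : CompactSpace ↥({0, 2 * r} : Set ℝ) :=
    isCompact_iff_compactSpace.mp ((Set.toFinite ({0, 2 * r} : Set ℝ)).isCompact)
  apply le_antisymm
  · have h := ghDist_le_hausdorffDist
      (isometry_subtype_coe : Isometry ((↑) : ↥(Set.Icc (0 : ℝ) (2 * r)) → ℝ))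
      (isometry_subtype_coe : Isometry ((↑) : ↥({0, 2 * r} : Set ℝ) → ℝ))
    rw [Subtype.range_coe, Subtype.range_coe] at h
    exact h.trans (aux_hd hr)
  · rw [← hausdorffDist_optimal]
    exact aux_ghlower hr (isometry_optimalGHInjl _ _) (isometry_optimalGHInjr _ _)
end

section
/- For r > 0, every correspondence R between B = {0,2r} ⊂ ℝ and A = [0,2r] ⊂ ℝ has distortion dis R = 2r. In particular every correspondence between A and B is optimal. -/
open GromovHausdorff Set

section Aux

variable {r : ℝ}

/-- In a preconnected space, two nonempty sets covering the space have points at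
arbitrarily small distance. -/
lemma close_pair {Z : Type*} [MetricSpace Z] [PreconnectedSpace Z]
    {S T : Set Z} (hS : S.Nonempty) (hT : T.Nonempty) (hcov : S ∪ T = univ)
    {ε : ℝ} (hε : 0 < ε) : ∃ s ∈ S, ∃ t ∈ T, dist s t < ε := by
  by_contra hcon
  push_neg at hcon
  have hdisj : closure S ∩ closure T = ∅ := by
    by_contra hne
    obtain ⟨x, hxS, hxT⟩ := Set.nonempty_iff_ne_empty.2 hne
    obtain ⟨s, hs, hds⟩ := Metric.mem_closure_iff.1 hxS (ε/2) (by linarith)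
    obtain ⟨t, ht, hdt⟩ := Metric.mem_closure_iff.1 hxT (ε/2) (by linarith)
    have := hcon s hs t ht
    have : dist s t ≤ dist s x + dist x t := dist_triangle _ _ _
    rw [dist_comm s x] at this
    linarith
  have hcov' : closure S ∪ closure T = univ := by
    have h1 : S ∪ T ⊆ closure S ∪ closure T :=
      union_subset_union subset_closure subset_closure
    rw [hcov] at h1
    exact eq_univ_of_univ_subset h1
  have hkey : closure S = (closure T)ᶜ := by
    apply subset_antisymm
    · intro x hx hxT
      exact (eq_empty_iff_forall_notMem.1 hdisj x) ⟨hx, hxT⟩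
    · intro x hx
      rcases (eq_univ_iff_forall.1 hcov' x) with h | h
      · exact h
      · exact absurd h hx
  have hclopen : IsClopen (closure S) := by
    constructor
    · exact isClosed_closure
    · rw [hkey, isOpen_compl_iff]
      exact isClosed_closure
  rcases isClopen_iff.1 hclopen with h | h
  · obtain ⟨s, hs⟩ := hS
    exact absurd (subset_closure hs) (by simp [h])
  · obtain ⟨t, ht⟩ := hT
    obtain ⟨x, hx⟩ := hS
    have : t ∈ closure S := h ▸ mem_univ t
    obtain ⟨s, hs, hds⟩ := Metric.mem_closure_iff.1 this ε hε
    have := hcon s hs t ht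
    rw [dist_comm] at hds
    linarith

end Aux

set_option maxHeartbeats 1000000 in
lemma distortion_eq_aux (r : ℝ) (hr : 0 < r)
    (R : Set (↥({0, 2 * r} : Set ℝ) × ↥(Set.Icc (0 : ℝ) (2 * r))))
    (hR : IsCorrespondence R) : distortion R = 2 * r := by
  have h2r : (0:ℝ) < 2 * r := by linarith
  haveI : PreconnectedSpace ↥(Set.Icc (0:ℝ) (2*r)) :=
    Subtype.preconnectedSpace isPreconnected_Icc
  let b0 : ↥({0, 2 * r} : Set ℝ) := ⟨0, by simp⟩
  let b1 : ↥({0, 2 * r} : Set ℝ) := ⟨2 * r, by simp⟩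
  have hBmem : ∀ b : ↥({0, 2 * r} : Set ℝ), b = b0 ∨ b = b1 := by
    rintro ⟨x, hx⟩
    rcases hx with h | h
    · left; exact Subtype.ext h
    · right; exact Subtype.ext h
  have distB : dist b0 b1 = 2 * r := by
    rw [Subtype.dist_eq, Real.dist_eq]
    simp [b0, b1, abs_of_nonneg h2r.le]
  have hdB : ∀ b b' : ↥({0, 2 * r} : Set ℝ), dist b b' ≤ 2 * r := by
    intro b b'
    rcases hBmem b with rfl | rfl <;> rcases hBmem b' with rfl | rfl
    · rw [dist_self]; exact h2r.le
    · rw [distB]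
    · rw [dist_comm, distB]
    · rw [dist_self]; exact h2r.le
  have hdA : ∀ a a' : ↥(Set.Icc (0:ℝ) (2*r)), dist a a' ≤ 2 * r := by
    intro a a'
    rw [Subtype.dist_eq, Real.dist_eq]
    have h1 := a.2.1; have h2 := a.2.2; have h3 := a'.2.1; have h4 := a'.2.2
    rw [abs_le]; constructor <;> linarith
  have hbdd : ∀ d ∈ {d : ℝ | ∃ p ∈ R, ∃ q ∈ R, d = |dist p.1 q.1 - dist p.2 q.2|},
      d ≤ 2 * r := by
    rintro d ⟨p, hp, q, hq, rfl⟩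
    have h1 := hdB p.1 q.1
    have h2 := hdA p.2 q.2
    have h3 : (0:ℝ) ≤ dist p.1 q.1 := dist_nonneg
    have h4 : (0:ℝ) ≤ dist p.2 q.2 := dist_nonneg
    rw [abs_le]; constructor <;> linarith
  obtain ⟨a0, ha0⟩ := hR.1 b0
  have hDne : {d : ℝ | ∃ p ∈ R, ∃ q ∈ R, d = |dist p.1 q.1 - dist p.2 q.2|}.Nonempty :=
    ⟨_, ⟨(b0, a0), ha0, (b0, a0), ha0, rfl⟩⟩
  have hDbddAbove : BddAbove {d : ℝ | ∃ p ∈ R, ∃ q ∈ R, d = |dist p.1 q.1 - dist p.2 q.2|} :=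
    ⟨2 * r, fun d hd => hbdd d hd⟩
  have hpair : ∀ ε > (0:ℝ), ∃ s t : ↥(Set.Icc (0:ℝ) (2*r)),
      (b0, s) ∈ R ∧ (b1, t) ∈ R ∧ dist s t < ε := by
    intro ε hε
    obtain ⟨a1, ha1⟩ := hR.1 b1
    have := close_pair (S := {a : ↥(Set.Icc (0:ℝ) (2*r)) | (b0, a) ∈ R})
      (T := {a : ↥(Set.Icc (0:ℝ) (2*r)) | (b1, a) ∈ R})
      ⟨a0, ha0⟩ ⟨a1, ha1⟩ ?_ hε
    · obtain ⟨s, hs, t, ht, hst⟩ := this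
      exact ⟨s, t, hs, ht, hst⟩
    · apply eq_univ_iff_forall.2
      intro a
      obtain ⟨b, hb⟩ := hR.2 a
      rcases hBmem b with rfl | rfl
      · exact Or.inl hb
      · exact Or.inr hb
  apply le_antisymm
  · exact csSup_le hDne hbdd
  · apply le_of_forall_sub_le
    intro ε hε
    obtain ⟨s, t, hs, ht, hst⟩ := hpair ε hε
    have hmem : |dist b0 b1 - dist s t| ∈
        {d : ℝ | ∃ p ∈ R, ∃ q ∈ R, d = |dist p.1 q.1 - dist p.2 q.2|} :=
      ⟨(b0, s), hs, (b1, t), ht, rfl⟩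
    have h1 : 2 * r - ε ≤ |dist b0 b1 - dist s t| := by
      rw [distB]
      have h2 : (0:ℝ) ≤ dist s t := dist_nonneg
      have h3 : 2 * r - dist s t ≤ |2 * r - dist s t| := le_abs_self _
      linarith
    exact h1.trans (le_csSup hDbddAbove hmem)

set_option maxHeartbeats 1000000 in
lemma ghDist_eq_aux (r : ℝ) (hr : 0 < r)
    [Nonempty ↥({0, 2 * r} : Set ℝ)] [CompactSpace ↥({0, 2 * r} : Set ℝ)]
    [Nonempty ↥(Set.Icc (0 : ℝ) (2 * r))] [CompactSpace ↥(Set.Icc (0 : ℝ) (2 * r))] :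
    ghDist ↥({0, 2 * r} : Set ℝ) ↥(Set.Icc (0 : ℝ) (2 * r)) = r := by
  have h2r : (0:ℝ) < 2 * r := by linarith
  haveI : PreconnectedSpace ↥(Set.Icc (0:ℝ) (2*r)) :=
    Subtype.preconnectedSpace isPreconnected_Icc
  let b0 : ↥({0, 2 * r} : Set ℝ) := ⟨0, by simp⟩
  let b1 : ↥({0, 2 * r} : Set ℝ) := ⟨2 * r, by simp⟩
  have hBmem : ∀ b : ↥({0, 2 * r} : Set ℝ), b = b0 ∨ b = b1 := by
    rintro ⟨x, hx⟩
    rcases hx with h | h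
    · left; exact Subtype.ext h
    · right; exact Subtype.ext h
  have distB : dist b0 b1 = 2 * r := by
    rw [Subtype.dist_eq, Real.dist_eq]
    simp [b0, b1, abs_of_nonneg h2r.le]
  apply le_antisymm
  · have h1 : ghDist ↥({0, 2 * r} : Set ℝ) ↥(Set.Icc (0 : ℝ) (2 * r)) ≤
        Metric.hausdorffDist (range (Subtype.val : ↥({0, 2 * r} : Set ℝ) → ℝ))
          (range (Subtype.val : ↥(Set.Icc (0 : ℝ) (2 * r)) → ℝ)) :=
      ghDist_le_hausdorffDist isometry_subtype_coe isometry_subtype_coe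
    rw [Subtype.range_coe, Subtype.range_coe] at h1
    refine h1.trans (Metric.hausdorffDist_le_of_mem_dist hr.le ?_ ?_)
    · intro x hx
      rcases hx with rfl | rfl
      · exact ⟨0, by simp [h2r.le, hr.le], by simp [hr.le]⟩
      · exact ⟨2 * r, by simp [h2r.le, hr.le], by simp [hr.le]⟩
    · intro y hy
      rcases le_or_gt y r with h | h
      · refine ⟨0, by simp, ?_⟩
        rw [Real.dist_eq, abs_of_nonneg (by linarith [hy.1] : (0:ℝ) ≤ y - 0)]
        linarith
      · refine ⟨2 * r, by simp, ?_⟩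
        rw [Real.dist_eq, abs_of_nonpos (by linarith [hy.2] : y - 2 * r ≤ 0)]
        linarith [hy.2]
  · set Φ := optimalGHInjl ↥({0, 2 * r} : Set ℝ) ↥(Set.Icc (0 : ℝ) (2 * r)) with hΦ
    set Ψ := optimalGHInjr ↥({0, 2 * r} : Set ℝ) ↥(Set.Icc (0 : ℝ) (2 * r)) with hΨ
    have hΦi : Isometry Φ := isometry_optimalGHInjl _ _
    have hΨi : Isometry Ψ := isometry_optimalGHInjr _ _
    have hH : Metric.hausdorffDist (range Φ) (range Ψ) =
        ghDist ↥({0, 2 * r} : Set ℝ) ↥(Set.Icc (0 : ℝ) (2 * r)) := GromovHausdorff.hausdorffDist_optimal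
    set h := ghDist ↥({0, 2 * r} : Set ℝ) ↥(Set.Icc (0 : ℝ) (2 * r)) with hh
    have hcΦ : IsCompact (range Φ) := isCompact_range hΦi.continuous
    have hcΨ : IsCompact (range Ψ) := isCompact_range hΨi.continuous
    have hfin : EMetric.hausdorffEdist (range Φ) (range Ψ) ≠ ⊤ :=
      Metric.hausdorffEdist_ne_top_of_nonempty_of_bounded (range_nonempty _)
        (range_nonempty _) hcΦ.isBounded hcΨ.isBounded
    have hfin' : EMetric.hausdorffEdist (range Ψ) (range Φ) ≠ ⊤ := by
      rw [EMetric.hausdorffEdist] at hfin ⊢; rwa [EMetric.hausdorffEdist_comm]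
    have hcover : ∀ a : ↥(Set.Icc (0:ℝ) (2*r)),
        dist (Ψ a) (Φ b0) ≤ h ∨ dist (Ψ a) (Φ b1) ≤ h := by
      intro a
      have h1 : Metric.infDist (Ψ a) (range Φ) ≤ Metric.hausdorffDist (range Ψ) (range Φ) :=
        Metric.infDist_le_hausdorffDist_of_mem (mem_range_self a) hfin'
      rw [Metric.hausdorffDist_comm, hH] at h1
      obtain ⟨y, ⟨b, rfl⟩, hy⟩ := hcΦ.exists_infDist_eq_dist (range_nonempty _) (Ψ a)
      rw [hy] at h1
      rcases hBmem b with rfl | rfl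
      · exact Or.inl h1
      · exact Or.inr h1
    have hne : ∀ b : ↥({0, 2 * r} : Set ℝ), ∃ a : ↥(Set.Icc (0:ℝ) (2*r)),
        dist (Ψ a) (Φ b) ≤ h := by
      intro b
      have h1 : Metric.infDist (Φ b) (range Ψ) ≤ Metric.hausdorffDist (range Φ) (range Ψ) :=
        Metric.infDist_le_hausdorffDist_of_mem (mem_range_self b) hfin
      rw [hH] at h1
      obtain ⟨y, ⟨a, rfl⟩, hy⟩ := hcΨ.exists_infDist_eq_dist (range_nonempty _) (Φ b)
      rw [hy] at h1
      exact ⟨a, by rwa [dist_comm]⟩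
    have hmain : ∀ ε > (0:ℝ), 2 * r - ε ≤ 2 * h := by
      intro ε hε
      obtain ⟨s0, hs0⟩ := hne b0
      obtain ⟨t0, ht0⟩ := hne b1
      obtain ⟨s, hs, t, ht, hst⟩ := close_pair
        (S := {a : ↥(Set.Icc (0:ℝ) (2*r)) | dist (Ψ a) (Φ b0) ≤ h})
        (T := {a : ↥(Set.Icc (0:ℝ) (2*r)) | dist (Ψ a) (Φ b1) ≤ h})
        ⟨s0, hs0⟩ ⟨t0, ht0⟩ (eq_univ_iff_forall.2 hcover) hε
      have h1 : dist (Φ b0) (Φ b1) = 2 * r := by rw [hΦi.dist_eq, distB]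
      have h2 : dist (Ψ s) (Ψ t) = dist s t := hΨi.dist_eq s t
      have h3 : dist (Φ b0) (Φ b1) ≤ dist (Φ b0) (Ψ s) + dist (Ψ s) (Ψ t) + dist (Ψ t) (Φ b1) :=
        dist_triangle4 _ _ _ _
      rw [h1, h2] at h3
      have hs' : dist (Φ b0) (Ψ s) ≤ h := by rw [dist_comm]; exact hs
      have ht' : dist (Ψ t) (Φ b1) ≤ h := ht
      linarith
    have : 2 * r ≤ 2 * h := le_of_forall_sub_le hmain
    linarith

theorem distortion_correspondence_pair_Icc (r : ℝ) (hr : 0 < r)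
    (R : Set (↥({0, 2 * r} : Set ℝ) × ↥(Set.Icc (0 : ℝ) (2 * r))))
    (hR : IsCorrespondence R) :
    distortion R = 2 * r ∧
    @GromovHausdorff.ghDist ↥({0, 2 * r} : Set ℝ) ↥(Set.Icc (0 : ℝ) (2 * r)) _
      (Set.Nonempty.to_subtype ⟨0, by simp⟩)
      (isCompact_iff_compactSpace.mp ((Set.toFinite ({0, 2 * r} : Set ℝ)).isCompact)) _
      (Set.Nonempty.to_subtype ⟨0, by constructor <;> nlinarith⟩)
      (isCompact_iff_compactSpace.mp isCompact_Icc) = distortion R / 2 := by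
  have h2r : (0:ℝ) < 2 * r := by linarith
  have hdist := distortion_eq_aux r hr R hR
  refine ⟨hdist, ?_⟩
  rw [hdist]
  haveI : Nonempty ↥({0, 2 * r} : Set ℝ) := ⟨⟨0, by simp⟩⟩
  haveI : Nonempty ↥(Set.Icc (0 : ℝ) (2 * r)) := ⟨⟨0, by simp [h2r.le, hr.le]⟩⟩
  haveI : CompactSpace ↥({0, 2 * r} : Set ℝ) :=
    isCompact_iff_compactSpace.mp ((Set.toFinite _).isCompact)
  haveI : CompactSpace ↥(Set.Icc (0 : ℝ) (2 * r)) :=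
    isCompact_iff_compactSpace.mp isCompact_Icc
  have hgh := ghDist_eq_aux r hr
  exact hgh.trans (by ring)
end

section
/- Balls in the Gromov–Hausdorff space centered at the one-point space are not convex in the strong sense: for any r > 0 there exist compact metric spaces A, B with d_GH(Δ₁,A) ≤ r and d_GH(Δ₁,B) ≤ r, and a geodesic γ: [0,1] → 𝓜 from A to B (d_GH(γ(s),γ(t)) = |s−t|·d_GH(A,B)) such that d_GH(Δ₁, γ(1/2)) > r. -/
open GromovHausdorff Set Metric Topology TopologicalSpace

namespace GHBall

def L1 : Type := ℝ × ℝ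

instance : MetricSpace L1 where
  dist p q := |p.1 - q.1| + |p.2 - q.2|
  dist_self p := by simp
  dist_comm p q := by simp [abs_sub_comm]
  dist_triangle p q s := by
    have h1 := abs_sub_le p.1 q.1 s.1
    have h2 := abs_sub_le p.2 q.2 s.2
    show |p.1 - s.1| + |p.2 - s.2| ≤ (|p.1 - q.1| + |p.2 - q.2|) + (|q.1 - s.1| + |q.2 - s.2|)
    linarith
  eq_of_dist_eq_zero := by
    intro p q h
    change |p.1 - q.1| + |p.2 - q.2| = 0 at h
    have h1 : |p.1 - q.1| = 0 := by
      have := abs_nonneg (p.1 - q.1); have := abs_nonneg (p.2 - q.2); linarith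
    have h2 : |p.2 - q.2| = 0 := by
      have := abs_nonneg (p.1 - q.1); have := abs_nonneg (p.2 - q.2); linarith
    have e1 : p.1 = q.1 := by have := abs_eq_zero.1 h1; linarith
    have e2 : p.2 = q.2 := by have := abs_eq_zero.1 h2; linarith
    exact Prod.ext e1 e2

lemma dist_L1 (p q : L1) : dist p q = |p.1 - q.1| + |p.2 - q.2| := rfl

lemma habs {x y : ℝ} (h : x ≤ y) : |x - y| = y - x := by
  rw [abs_sub_comm, abs_of_nonneg (by linarith)]

/-- package the range of a finite family as a nonempty compact subset -/
def cpt {ι : Type} [Finite ι] [Nonempty ι] (f : ι → L1) : NonemptyCompacts L1 :=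
  ⟨⟨Set.range f, (Set.finite_range f).isCompact⟩, Set.range_nonempty f⟩

/-- extraction: from the realized GH distance, an almost isometric map -/
theorem exists_approx_map (X : Type*) (Y : Type*) [MetricSpace X] [CompactSpace X] [Nonempty X]
    [MetricSpace Y] [CompactSpace Y] [Nonempty Y] :
    ∃ F : X → Y, ∀ x x' : X,
      dist x x' ≤ dist (F x) (F x') + 2 * dist (toGHSpace X) (toGHSpace Y) ∧
      dist (F x) (F x') ≤ dist x x' + 2 * dist (toGHSpace X) (toGHSpace Y) := by
  obtain ⟨Φ, Ψ, hΦ, hΨ, hd⟩ := ghDist_eq_hausdorffDist X Y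
  have hne : EMetric.hausdorffEdist (range Φ) (range Ψ) ≠ ⊤ :=
    hausdorffEdist_ne_top_of_nonempty_of_bounded (range_nonempty _) (range_nonempty _)
      (isCompact_range hΦ.continuous).isBounded (isCompact_range hΨ.continuous).isBounded
  have key : ∀ x : X, ∃ y : Y, dist (Φ x) (Ψ y) ≤ dist (toGHSpace X) (toGHSpace Y) := by
    intro x
    have h1 : infDist (Φ x) (range Ψ) ≤ hausdorffDist (range Φ) (range Ψ) :=
      infDist_le_hausdorffDist_of_mem (mem_range_self x) hne
    obtain ⟨z, hz, hzd⟩ := (isCompact_range hΨ.continuous).exists_infDist_eq_dist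
      (range_nonempty Ψ) (Φ x)
    obtain ⟨y, hy⟩ := hz
    refine ⟨y, ?_⟩
    rw [hy, ← hzd]
    calc infDist (Φ x) (range Ψ) ≤ hausdorffDist (range Φ) (range Ψ) := h1
      _ = dist (toGHSpace X) (toGHSpace Y) := by rw [← hd]; rfl
  choose F hF using key
  refine ⟨F, fun x x' => ?_⟩
  have e1 : dist x x' = dist (Φ x) (Φ x') := (hΦ.dist_eq x x').symm
  have e2 : dist (F x) (F x') = dist (Ψ (F x)) (Ψ (F x')) := (hΨ.dist_eq _ _).symm
  constructor
  · rw [e1, e2]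
    have := dist_triangle4 (Φ x) (Ψ (F x)) (Ψ (F x')) (Φ x')
    have h1 := hF x; have h2 := hF x'
    rw [dist_comm (Ψ (F x')) (Φ x')] at this
    linarith
  · rw [e1, e2]
    have := dist_triangle4 (Ψ (F x)) (Φ x) (Φ x') (Ψ (F x'))
    have h1 := hF x; have h2 := hF x'
    rw [dist_comm (Ψ (F x)) (Φ x)] at this
    linarith

/-- upper bound on GH distance from an index-matched distortion bound -/
theorem toGH_dist_le {ι : Type} [Finite ι] [Nonempty ι] (f g : ι → L1)
    (hf : Function.Injective f) {ε : ℝ}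
    (H : ∀ i j, |dist (f i) (f j) - dist (g i) (g j)| ≤ ε) :
    dist (cpt f).toGHSpace (cpt g).toGHSpace ≤ ε / 2 := by
  haveI : Finite ↥(Set.range f) := (Set.finite_range f).to_subtype
  haveI : Nonempty ↥(Set.range f) := (Set.range_nonempty f).to_subtype
  haveI : Finite ↥(Set.range g) := (Set.finite_range g).to_subtype
  haveI : Nonempty ↥(Set.range g) := (Set.range_nonempty g).to_subtype
  have main : ghDist ↥(Set.range f) ↥(Set.range g) ≤ 0 + ε / 2 + 0 := by
    classical
    set idx : ↥(univ : Set ↥(Set.range f)) → ι := fun x => x.1.2.choose with hidx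
    have hspec : ∀ x : ↥(univ : Set ↥(Set.range f)), f (idx x) = x.1.1 :=
      fun x => x.1.2.choose_spec
    refine ghDist_le_of_approx_subsets
      (Φ := fun x : ↥(univ : Set ↥(Set.range f)) =>
        (⟨g (idx x), mem_range_self _⟩ : ↥(Set.range g)))
      (fun x => ⟨x, mem_univ x, by simp⟩) ?_ ?_
    · rintro ⟨y, j, rfl⟩
      refine ⟨⟨⟨f j, mem_range_self j⟩, mem_univ _⟩, ?_⟩
      have : idx ⟨⟨f j, mem_range_self j⟩, mem_univ _⟩ = j := by
        apply hf; exact hspec _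
      simp only [this]
      rw [Subtype.dist_eq]
      simp
    · intro x y
      have dxy : dist x y = dist (f (idx x)) (f (idx y)) := by
        rw [Subtype.dist_eq, Subtype.dist_eq, hspec x, hspec y]
      have dgxy : dist ((⟨g (idx x), mem_range_self _⟩ : ↥(Set.range g)))
          (⟨g (idx y), mem_range_self _⟩ : ↥(Set.range g)) = dist (g (idx x)) (g (idx y)) :=
        Subtype.dist_eq _ _
      rw [dxy, dgxy]
      exact H _ _
  have main' : ghDist ↥(Set.range f) ↥(Set.range g) ≤ ε / 2 := by simpa using main
  exact main'

theorem punit_dist_le {ι : Type} [Finite ι] [Nonempty ι] (f : ι → L1) {c : ℝ}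
    (H : ∀ i j, dist (f i) (f j) ≤ 2 * c) :
    dist (GromovHausdorff.toGHSpace PUnit) (cpt f).toGHSpace ≤ c := by
  haveI : Finite ↥(Set.range f) := (Set.finite_range f).to_subtype
  haveI : Nonempty ↥(Set.range f) := (Set.range_nonempty f).to_subtype
  rw [dist_comm]
  have main : ghDist ↥(Set.range f) PUnit ≤ 0 + 2 * c / 2 + 0 := by
    refine ghDist_le_of_approx_subsets
      (Φ := fun _ : ↥(univ : Set ↥(Set.range f)) => PUnit.unit)
      (fun x => ⟨x, mem_univ x, by simp⟩) ?_ ?_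
    · intro x
      have hne : Nonempty ↥(Set.range f) := inferInstance
      obtain ⟨y⟩ := hne
      refine ⟨⟨y, mem_univ y⟩, ?_⟩
      have : x = PUnit.unit := rfl
      simp [this]
    · rintro ⟨⟨x, i, rfl⟩, -⟩ ⟨⟨y, j, rfl⟩, -⟩
      have h0 : dist (PUnit.unit) (PUnit.unit) = 0 := dist_self _
      rw [h0, sub_zero, abs_of_nonneg dist_nonneg, Subtype.dist_eq, Subtype.dist_eq]
      exact H i j
  have : ghDist ↥(Set.range f) PUnit ≤ c := by linarith
  exact this

variable (r : ℝ)

noncomputable def a : Fin 4 → ℝ := fun i => ![0, 2/3, 4/3, 2] i * r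
noncomputable def m : Fin 4 → ℝ := fun i => ![-(1/3), 1/3, 5/3, 7/3] i * r
noncomputable def b : Fin 4 → ℝ := fun i => ![0, 0, 2, 2] i * r

noncomputable def pX (u : ℝ) : Fin 4 → L1 := fun i => ((1-u) * a r i, u * m r i)
noncomputable def pY (v : ℝ) : Fin 4 → L1 := fun i => (v * b r i, (1-v) * m r i)

def P0 : L1 := ((0:ℝ), (0:ℝ))
noncomputable def P2 : L1 := ((2*r : ℝ), (0:ℝ))

lemma a0 : a r 0 = 0 := by norm_num [a]
lemma a1 : a r 1 = 2/3 * r := by norm_num [a]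
lemma a2 : a r 2 = 4/3 * r := by norm_num [a]; left; rfl
lemma a3 : a r 3 = 2 * r := by norm_num [a]; left; rfl
lemma m0 : m r 0 = -(1/3) * r := by norm_num [m]
lemma m3 : m r 3 = 7/3 * r := by norm_num [m]; left; rfl

lemma dist_pX {u : ℝ} (h0 : 0 ≤ u) (h1 : u ≤ 1) (i j : Fin 4) :
    dist (pX r u i) (pX r u j) = (1-u) * |a r i - a r j| + u * |m r i - m r j| := by
  rw [dist_L1]
  show |(1-u) * a r i - (1-u) * a r j| + |u * m r i - u * m r j| = _
  rw [show (1-u) * a r i - (1-u) * a r j = (1-u) * (a r i - a r j) by ring,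
      show u * m r i - u * m r j = u * (m r i - m r j) by ring,
      abs_mul, abs_mul, abs_of_nonneg (by linarith : (0:ℝ) ≤ 1 - u), abs_of_nonneg h0]

lemma dist_pY {v : ℝ} (h0 : 0 ≤ v) (h1 : v ≤ 1) (i j : Fin 4) :
    dist (pY r v i) (pY r v j) = v * |b r i - b r j| + (1-v) * |m r i - m r j| := by
  rw [dist_L1]
  show |v * b r i - v * b r j| + |(1-v) * m r i - (1-v) * m r j| = _
  rw [show v * b r i - v * b r j = v * (b r i - b r j) by ring,
      show (1-v) * m r i - (1-v) * m r j = (1-v) * (m r i - m r j) by ring,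
      abs_mul, abs_mul, abs_of_nonneg (by linarith : (0:ℝ) ≤ 1 - v), abs_of_nonneg h0]

lemma disAM (hr : 0 ≤ r) : ∀ i j, abs (|a r i - a r j| - |m r i - m r j|) ≤ 2*r/3 := by
  intro i j
  refine le_trans (abs_abs_sub_abs_le_abs_sub _ _) ?_
  fin_cases i <;> fin_cases j <;>
    (simp only [a, m]; norm_num;
     first
       | (rw [abs_sub_le_iff]; constructor <;> linarith)
       | (rw [abs_le]; constructor <;> linarith)
       | linarith)

lemma disMB (hr : 0 ≤ r) : ∀ i j, abs (|b r i - b r j| - |m r i - m r j|) ≤ 2*r/3 := by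
  intro i j
  refine le_trans (abs_abs_sub_abs_le_abs_sub _ _) ?_
  fin_cases i <;> fin_cases j <;>
    (simp only [b, m]; norm_num;
     first
       | (rw [abs_sub_le_iff]; constructor <;> linarith)
       | (rw [abs_le]; constructor <;> linarith)
       | linarith)

lemma disAB (hr : 0 ≤ r) : ∀ i j, abs (|a r i - a r j| - |b r i - b r j|) ≤ 4*r/3 := by
  intro i j
  refine le_trans (abs_abs_sub_abs_le_abs_sub _ _) ?_
  fin_cases i <;> fin_cases j <;>
    (simp only [a, b]; norm_num;
     first
       | (rw [abs_sub_le_iff]; constructor <;> linarith)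
       | (rw [abs_le]; constructor <;> linarith)
       | linarith [abs_of_nonneg hr])

lemma a_inj (hr : 0 < r) : Function.Injective (a r) := by
  intro i j h
  simp only [a] at h
  have h' : ![0, 2/3, 4/3, 2] i = ![(0:ℝ), 2/3, 4/3, 2] j := by
    exact mul_right_cancel₀ (ne_of_gt hr) h
  fin_cases i <;> fin_cases j <;> first | rfl | (exfalso; norm_num at h')

lemma m_inj (hr : 0 < r) : Function.Injective (m r) := by
  intro i j h
  simp only [m] at h
  have h' : ![-(1/3), 1/3, 5/3, 7/3] i = ![-((1:ℝ)/3), 1/3, 5/3, 7/3] j := by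
    exact mul_right_cancel₀ (ne_of_gt hr) h
  fin_cases i <;> fin_cases j <;> first | rfl | (exfalso; norm_num at h')

lemma pX_inj (hr : 0 < r) {u : ℝ} (h0 : 0 ≤ u) (h1 : u ≤ 1) : Function.Injective (pX r u) := by
  intro i j h
  have ha : (1-u) * a r i = (1-u) * a r j := congrArg Prod.fst h
  have hm : u * m r i = u * m r j := congrArg Prod.snd h
  rcases lt_or_eq_of_le h1 with hu | hu
  · exact a_inj r hr (mul_left_cancel₀ (by linarith : (1:ℝ) - u ≠ 0) ha)
  · subst hu
    exact m_inj r hr (mul_left_cancel₀ one_ne_zero hm)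

lemma pY_inj (hr : 0 < r) {v : ℝ} (h1 : v < 1) : Function.Injective (pY r v) := by
  intro i j h
  have hm : (1-v) * m r i = (1-v) * m r j := congrArg Prod.snd h
  exact m_inj r hr (mul_left_cancel₀ (by linarith : (1:ℝ) - v ≠ 0) hm)

/-- the X leg: from A (u = 0) to the bulging midpoint M (u = 1) -/
lemma hXle (hr : 0 < r) {u u' : ℝ} (h0 : 0 ≤ u) (huu : u ≤ u') (h1 : u' ≤ 1) :
    dist (cpt (pX r u)).toGHSpace (cpt (pX r u')).toGHSpace ≤ (u' - u) * (2*r/3) / 2 := by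
  refine toGH_dist_le _ _ (pX_inj r hr h0 (by linarith)) ?_
  intro i j
  rw [dist_pX r h0 (by linarith), dist_pX r (by linarith) h1]
  have e : (1-u) * |a r i - a r j| + u * |m r i - m r j| -
      ((1-u') * |a r i - a r j| + u' * |m r i - m r j|) =
      (u' - u) * (|a r i - a r j| - |m r i - m r j|) := by ring
  rw [e, abs_mul, abs_of_nonneg (by linarith : (0:ℝ) ≤ u' - u)]
  exact mul_le_mul_of_nonneg_left (disAM r hr.le i j) (by linarith)

/-- the Y leg: from the bulging midpoint M (v = 0) to B (v = 1) -/
lemma hYle (hr : 0 < r) {v v' : ℝ} (h0 : 0 ≤ v) (hvv : v ≤ v') (h1 : v' ≤ 1) :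
    dist (cpt (pY r v)).toGHSpace (cpt (pY r v')).toGHSpace ≤ (v' - v) * (2*r/3) / 2 := by
  rcases eq_or_lt_of_le hvv with rfl | hlt
  · simp
  · refine toGH_dist_le _ _ (pY_inj r hr (lt_of_lt_of_le hlt h1)) ?_
    intro i j
    rw [dist_pY r h0 (by linarith), dist_pY r (by linarith) h1]
    have e : v * |b r i - b r j| + (1-v) * |m r i - m r j| -
        (v' * |b r i - b r j| + (1-v') * |m r i - m r j|) =
        (v - v') * (|b r i - b r j| - |m r i - m r j|) := by ring
    rw [e, abs_mul, abs_of_nonpos (by linarith : v - v' ≤ (0:ℝ)), neg_sub]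
    exact mul_le_mul_of_nonneg_left (disMB r hr.le i j) (by linarith)

lemma hABle (hr : 0 < r) :
    dist (cpt (pX r 0)).toGHSpace (cpt (pY r 1)).toGHSpace ≤ 4*r/3 / 2 := by
  refine toGH_dist_le _ _ (pX_inj r hr le_rfl zero_le_one) ?_
  intro i j
  rw [dist_pX r le_rfl zero_le_one, dist_pY r zero_le_one le_rfl]
  have e : (1-0) * |a r i - a r j| + 0 * |m r i - m r j| -
      (1 * |b r i - b r j| + (1-1) * |m r i - m r j|) =
      |a r i - a r j| - |b r i - b r j| := by ring
  rw [e]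
  exact disAB r hr.le i j

lemma cptXY : cpt (pX r 1) = cpt (pY r 0) := by
  have : pX r 1 = pY r 0 := by
    funext i
    show ((1-1) * a r i, 1 * m r i) = ((0:ℝ) * b r i, (1-0) * m r i)
    norm_num
  rw [this]


lemma diamA (hr : 0 < r) : ∀ i j, dist (pX r 0 i) (pX r 0 j) ≤ 2 * r := by
  intro i j
  rw [dist_pX r le_rfl zero_le_one]
  have : (1-(0:ℝ)) * |a r i - a r j| + 0 * |m r i - m r j| = |a r i - a r j| := by ring
  rw [this]
  fin_cases i <;> fin_cases j <;>
    (simp only [a]; norm_num;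
     first
       | (rw [abs_sub_le_iff]; constructor <;> linarith)
       | (rw [abs_le]; constructor <;> linarith)
       | linarith [abs_of_pos hr])

lemma diamB (hr : 0 < r) : ∀ i j, dist (pY r 1 i) (pY r 1 j) ≤ 2 * r := by
  intro i j
  rw [dist_pY r zero_le_one le_rfl]
  have : (1:ℝ) * |b r i - b r j| + (1-1) * |m r i - m r j| = |b r i - b r j| := by ring
  rw [this]
  fin_cases i <;> fin_cases j <;>
    (simp only [b]; norm_num;
     first
       | (rw [abs_sub_le_iff]; constructor <;> linarith)
       | (rw [abs_le]; constructor <;> linarith)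
       | linarith)

lemma hABge (hr : 0 < r) :
    4*r/3/2 ≤ dist (cpt (pX r 0)).toGHSpace (cpt (pY r 1)).toGHSpace := by
  haveI : Finite ↥(Set.range (pX r 0)) := (Set.finite_range _).to_subtype
  haveI : Nonempty ↥(Set.range (pX r 0)) := (Set.range_nonempty _).to_subtype
  haveI : Finite ↥(Set.range (pY r 1)) := (Set.finite_range _).to_subtype
  haveI : Nonempty ↥(Set.range (pY r 1)) := (Set.range_nonempty _).to_subtype
  obtain ⟨F, hF⟩ := exists_approx_map ↥(Set.range (pX r 0)) ↥(Set.range (pY r 1))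
  have hgoal : dist (toGHSpace ↥(Set.range (pX r 0))) (toGHSpace ↥(Set.range (pY r 1))) =
      dist (cpt (pX r 0)).toGHSpace (cpt (pY r 1)).toGHSpace := rfl
  rw [← hgoal]
  set D := dist (toGHSpace ↥(Set.range (pX r 0))) (toGHSpace ↥(Set.range (pY r 1))) with hD
  -- the four points of A inside the subtype
  set α : Fin 4 → ↥(Set.range (pX r 0)) := fun i => ⟨pX r 0 i, mem_range_self i⟩ with hα
  have dα : ∀ i j, dist (α i) (α j) = |a r i - a r j| := by
    intro i j
    rw [Subtype.dist_eq]
    show dist (pX r 0 i) (pX r 0 j) = _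
    rw [dist_pX r le_rfl zero_le_one]; ring
  have hA01 : dist (α 0) (α 1) = 2*r/3 := by
    rw [dα, a0, a1, habs (by linarith : (0:ℝ) ≤ 2/3 * r)]; ring
  have hA12 : dist (α 1) (α 2) = 2*r/3 := by
    rw [dα, a1, a2, habs (by linarith : 2/3 * r ≤ 4/3 * r)]; ring
  have hA23 : dist (α 2) (α 3) = 2*r/3 := by
    rw [dα, a2, a3, habs (by linarith : 4/3 * r ≤ 2 * r)]; ring
  have hA03 : dist (α 0) (α 3) = 2*r := by
    rw [dα, a0, a3, habs (by linarith : (0:ℝ) ≤ 2 * r)]; ring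
  -- every point of B is one of the two endpoints
  have hBval : ∀ y : ↥(Set.range (pY r 1)),
      (y : L1) = P0 ∨ (y : L1) = P2 r := by
    rintro ⟨y, j, rfl⟩
    fin_cases j
    · left; show pY r 1 _ = _; simp [pY, b, m, P0, Prod.ext_iff]; rfl
    · left; show pY r 1 _ = _; simp [pY, b, m, P0, Prod.ext_iff]; rfl
    · right; show pY r 1 _ = _; simp [pY, b, m, P2, Prod.ext_iff]; rfl
    · right; show pY r 1 _ = _; simp [pY, b, m, P2, Prod.ext_iff]; rfl
  have hPP : dist P0 (P2 r) = 2*r := by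
    show |(0:ℝ) - 2*r| + |(0:ℝ) - 0| = 2*r
    rw [habs (by linarith : (0:ℝ) ≤ 2*r)]
    simp
  have hPP' : dist (P2 r) P0 = 2*r := by
    rw [dist_comm]; exact hPP
  have hPP0 : dist P0 P0 = 0 := dist_self _
  have hPP2 : dist (P2 r) (P2 r) = 0 := dist_self _
  obtain ⟨E01a, E01b⟩ := hF (α 0) (α 1)
  obtain ⟨E12a, E12b⟩ := hF (α 1) (α 2)
  obtain ⟨E23a, E23b⟩ := hF (α 2) (α 3)
  obtain ⟨E03a, E03b⟩ := hF (α 0) (α 3)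
  rw [hA01] at E01a E01b
  rw [hA12] at E12a E12b
  rw [hA23] at E23a E23b
  rw [hA03] at E03a E03b
  rw [Subtype.dist_eq (F (α 0)) (F (α 1))] at E01a E01b
  rw [Subtype.dist_eq (F (α 1)) (F (α 2))] at E12a E12b
  rw [Subtype.dist_eq (F (α 2)) (F (α 3))] at E23a E23b
  rw [Subtype.dist_eq (F (α 0)) (F (α 3))] at E03a E03b
  rcases hBval (F (α 0)) with h0 | h0 <;> rcases hBval (F (α 1)) with h1 | h1 <;>
    rcases hBval (F (α 2)) with h2 | h2 <;> rcases hBval (F (α 3)) with h3 | h3 <;>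
    simp only [h0, h1, h2, h3, hPP, hPP', hPP0, hPP2, dist_self] at E01a E01b E12a E12b E23a E23b E03a E03b <;>
    linarith

lemma hPM (hr : 0 < r) :
    r < dist (GromovHausdorff.toGHSpace PUnit) ((cpt (pX r 1)).toGHSpace) := by
  haveI : Finite ↥(Set.range (pX r 1)) := (Set.finite_range _).to_subtype
  haveI : Nonempty ↥(Set.range (pX r 1)) := (Set.range_nonempty _).to_subtype
  obtain ⟨F, hF⟩ := exists_approx_map ↥(Set.range (pX r 1)) PUnit
  set x0 : ↥(Set.range (pX r 1)) := ⟨pX r 1 0, mem_range_self 0⟩ with hx0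
  set x3 : ↥(Set.range (pX r 1)) := ⟨pX r 1 3, mem_range_self 3⟩ with hx3
  have h := (hF x0 x3).1
  have hd : dist x0 x3 = 8*r/3 := by
    rw [Subtype.dist_eq]
    show dist (pX r 1 0) (pX r 1 3) = _
    rw [dist_pX r zero_le_one le_rfl,
      show (1-(1:ℝ)) * |a r 0 - a r 3| + 1 * |m r 0 - m r 3| = |m r 0 - m r 3| by ring,
      m0, m3, habs (by linarith : -(1/3) * r ≤ 7/3 * r)]
    ring
  have hu : dist (F x0) (F x3) = 0 := by
    rw [Subsingleton.elim (F x0) (F x3)]; exact dist_self _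
  rw [hd, hu] at h
  have hgoal : dist (toGHSpace ↥(Set.range (pX r 1))) (toGHSpace PUnit) =
      dist (GromovHausdorff.toGHSpace PUnit) ((cpt (pX r 1)).toGHSpace) := dist_comm _ _
  rw [← hgoal]
  linarith

noncomputable def gam (s : ℝ) : GHSpace :=
  if s ≤ 1/2 then (cpt (pX r (2*s))).toGHSpace else (cpt (pY r (2*s-1))).toGHSpace

lemma gam_le {s : ℝ} (hs : s ≤ 1/2) : gam r s = (cpt (pX r (2*s))).toGHSpace := by
  rw [gam, if_pos hs]

lemma gam_gt {s : ℝ} (hs : ¬ s ≤ 1/2) : gam r s = (cpt (pY r (2*s-1))).toGHSpace := by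
  rw [gam, if_neg hs]

lemma gam_zero : gam r 0 = (cpt (pX r 0)).toGHSpace := by
  rw [gam_le r (by norm_num), show (2:ℝ) * 0 = 0 by norm_num]

lemma gam_one : gam r 1 = (cpt (pY r 1)).toGHSpace := by
  rw [gam_gt r (by norm_num), show (2:ℝ) * 1 - 1 = 1 by norm_num]

lemma gam_half : gam r (1/2) = (cpt (pX r 1)).toGHSpace := by
  rw [gam_le r (by norm_num), show (2:ℝ) * (1/2) = 1 by norm_num]

lemma dAB (hr : 0 < r) : dist (gam r 0) (gam r 1) = 2*r/3 := by
  rw [gam_zero, gam_one]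
  have h1 := hABle r hr
  have h2 := hABge r hr
  apply le_antisymm <;> linarith

lemma dAM (hr : 0 < r) : dist (gam r 0) (gam r (1/2)) = r/3 := by
  rw [gam_zero, gam_half]
  have h1 : dist (cpt (pX r 0)).toGHSpace (cpt (pX r 1)).toGHSpace ≤ (1-0) * (2*r/3) / 2 :=
    hXle r hr le_rfl zero_le_one le_rfl
  have h2 : dist (cpt (pY r 0)).toGHSpace (cpt (pY r 1)).toGHSpace ≤ (1-0) * (2*r/3) / 2 :=
    hYle r hr le_rfl zero_le_one le_rfl
  rw [← cptXY r] at h2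
  have h3 := hABge r hr
  have tri := dist_triangle (cpt (pX r 0)).toGHSpace (cpt (pX r 1)).toGHSpace
    (cpt (pY r 1)).toGHSpace
  apply le_antisymm <;> linarith

lemma dMB (hr : 0 < r) : dist (gam r (1/2)) (gam r 1) = r/3 := by
  rw [gam_half, gam_one]
  have h1 : dist (cpt (pX r 0)).toGHSpace (cpt (pX r 1)).toGHSpace ≤ (1-0) * (2*r/3) / 2 :=
    hXle r hr le_rfl zero_le_one le_rfl
  have h2 : dist (cpt (pY r 0)).toGHSpace (cpt (pY r 1)).toGHSpace ≤ (1-0) * (2*r/3) / 2 :=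
    hYle r hr le_rfl zero_le_one le_rfl
  rw [← cptXY r] at h2
  have h3 := hABge r hr
  have tri := dist_triangle (cpt (pX r 0)).toGHSpace (cpt (pX r 1)).toGHSpace
    (cpt (pY r 1)).toGHSpace
  apply le_antisymm <;> linarith

lemma key (hr : 0 < r) {s t : ℝ} (hs : 0 ≤ s) (hst : s ≤ t) (ht : t ≤ 1) :
    dist (gam r s) (gam r t) = (t - s) * (2*r/3) := by
  have hAM := dAM r hr
  have hMB := dMB r hr
  have hAB := dAB r hr
  rcases le_or_gt t (1/2) with h | h
  · -- both on the X leg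
    have hs2 : s ≤ 1/2 := le_trans hst h
    rw [gam_le r hs2, gam_le r h]
    have up : dist (cpt (pX r (2*s))).toGHSpace (cpt (pX r (2*t))).toGHSpace ≤
        (2*t - 2*s) * (2*r/3) / 2 := hXle r hr (by linarith) (by linarith) (by linarith)
    have l1 : dist (cpt (pX r (2*0))).toGHSpace (cpt (pX r (2*s))).toGHSpace ≤
        (2*s - 2*0) * (2*r/3) / 2 := hXle r hr (by linarith) (by linarith) (by linarith)
    have l2 : dist (cpt (pX r (2*t))).toGHSpace (cpt (pX r 1)).toGHSpace ≤
        (1 - 2*t) * (2*r/3) / 2 := hXle r hr (by linarith) (by linarith) (by linarith)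
    have tri := dist_triangle4 (cpt (pX r (2*0))).toGHSpace (cpt (pX r (2*s))).toGHSpace
      (cpt (pX r (2*t))).toGHSpace (cpt (pX r 1)).toGHSpace
    rw [gam_zero, gam_half] at hAM
    rw [show (2:ℝ)*0 = 0 by norm_num] at tri l1
    apply le_antisymm <;> linarith
  · rcases le_or_gt s (1/2) with h' | h'
    · -- mixed case
      rw [gam_le r h', gam_gt r (by linarith)]
      have u1 : dist (cpt (pX r (2*s))).toGHSpace (cpt (pX r 1)).toGHSpace ≤
          (1 - 2*s) * (2*r/3) / 2 := hXle r hr (by linarith) (by linarith) (by linarith)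
      have u2 : dist (cpt (pY r 0)).toGHSpace (cpt (pY r (2*t-1))).toGHSpace ≤
          (2*t - 1 - 0) * (2*r/3) / 2 := hYle r hr (by linarith) (by linarith) (by linarith)
      have l1 : dist (cpt (pX r 0)).toGHSpace (cpt (pX r (2*s))).toGHSpace ≤
          (2*s - 0) * (2*r/3) / 2 := hXle r hr (by linarith) (by linarith) (by linarith)
      have l2 : dist (cpt (pY r (2*t-1))).toGHSpace (cpt (pY r 1)).toGHSpace ≤
          (1 - (2*t-1)) * (2*r/3) / 2 := hYle r hr (by linarith) (by linarith) (by linarith)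
      have tri1 := dist_triangle (cpt (pX r (2*s))).toGHSpace (cpt (pX r 1)).toGHSpace
        (cpt (pY r (2*t-1))).toGHSpace
      have hmid : dist (cpt (pX r 1)).toGHSpace (cpt (pY r (2*t-1))).toGHSpace =
          dist (cpt (pY r 0)).toGHSpace (cpt (pY r (2*t-1))).toGHSpace := by
        rw [cptXY r]
      rw [hmid] at tri1
      have tri2 := dist_triangle4 (cpt (pX r 0)).toGHSpace (cpt (pX r (2*s))).toGHSpace
        (cpt (pY r (2*t-1))).toGHSpace (cpt (pY r 1)).toGHSpace
      rw [gam_zero, gam_one] at hAB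
      apply le_antisymm <;> linarith
    · -- both on the Y leg
      rw [gam_gt r (by linarith), gam_gt r (by linarith)]
      have up : dist (cpt (pY r (2*s-1))).toGHSpace (cpt (pY r (2*t-1))).toGHSpace ≤
          (2*t - 1 - (2*s-1)) * (2*r/3) / 2 := hYle r hr (by linarith) (by linarith) (by linarith)
      have l1 : dist (cpt (pY r 0)).toGHSpace (cpt (pY r (2*s-1))).toGHSpace ≤
          (2*s - 1 - 0) * (2*r/3) / 2 := hYle r hr (by linarith) (by linarith) (by linarith)
      have l2 : dist (cpt (pY r (2*t-1))).toGHSpace (cpt (pY r 1)).toGHSpace ≤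
          (1 - (2*t-1)) * (2*r/3) / 2 := hYle r hr (by linarith) (by linarith) (by linarith)
      have tri := dist_triangle4 (cpt (pY r 0)).toGHSpace (cpt (pY r (2*s-1))).toGHSpace
        (cpt (pY r (2*t-1))).toGHSpace (cpt (pY r 1)).toGHSpace
      rw [gam_half, gam_one] at hMB
      rw [cptXY r] at hMB
      apply le_antisymm <;> linarith

end GHBall

open GHBall

/-- Balls centered at the one-point space are not convex in the strong sense: there are
two compact spaces in the ball of radius `r` joined by a geodesic leaving the ball. -/
theorem ball_at_onePoint_not_strongly_convex (r : ℝ) (hr : 0 < r) :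
    ∃ A B : GromovHausdorff.GHSpace,
      dist (GromovHausdorff.toGHSpace PUnit) A ≤ r ∧
      dist (GromovHausdorff.toGHSpace PUnit) B ≤ r ∧
      ∃ γ : ℝ → GromovHausdorff.GHSpace, γ 0 = A ∧ γ 1 = B ∧
        (∀ s ∈ Icc (0 : ℝ) 1, ∀ t ∈ Icc (0 : ℝ) 1,
          dist (γ s) (γ t) = |s - t| * dist A B) ∧
        r < dist (GromovHausdorff.toGHSpace PUnit) (γ (1 / 2)) := by
  refine ⟨(cpt (pX r 0)).toGHSpace, (cpt (pY r 1)).toGHSpace,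
    punit_dist_le _ (diamA r hr), punit_dist_le _ (diamB r hr), gam r, gam_zero r, gam_one r,
    ?_, ?_⟩
  · intro s hs t ht
    have hd : dist (cpt (pX r 0)).toGHSpace (cpt (pY r 1)).toGHSpace = 2*r/3 := by
      have := dAB r hr; rwa [gam_zero, gam_one] at this
    rw [hd]
    rcases le_total s t with hst | hst
    · rw [abs_of_nonpos (by linarith), key r hr hs.1 hst ht.2]
      try ring
    · rw [abs_of_nonneg (by linarith), dist_comm, key r hr ht.1 hst hs.2]
      try ring
  · rw [gam_half]
    exact hPM r hr
end

section
/- For r > 0, let A = [0,2r] and B = {0,2r} in ℝ, and for t ∈ [0,r] let C_t(A,B) = B_t(A) ∩ B_{r−t}(B), where B_s(S) denotes the closed s-neighborhood of S in ℝ. Then diam(C_{r/2}(A,B)) = 3r. -/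
open Metric Set

theorem diam_Cs_midpoint (r : ℝ) (hr : 0 < r) :
    Metric.diam (Metric.cthickening (r / 2) (Set.Icc (0 : ℝ) (2 * r)) ∩
      Metric.cthickening (r - r / 2) ({0, 2 * r} : Set ℝ)) = 3 * r := by
  set S := Metric.cthickening (r / 2) (Set.Icc (0 : ℝ) (2 * r)) ∩
      Metric.cthickening (r - r / 2) ({0, 2 * r} : Set ℝ) with hS
  have hbd : Bornology.IsBounded S := by
    exact ((Metric.isBounded_Icc (0:ℝ) (2*r)).cthickening).subset inter_subset_left
  have hm1 : (-(r/2)) ∈ S := by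
    constructor
    · exact mem_cthickening_of_dist_le _ 0 _ _ ⟨le_refl _, by linarith⟩
        (by rw [Real.dist_eq]; rw [abs_of_nonpos (by linarith)]; linarith)
    · exact mem_cthickening_of_dist_le _ 0 _ _ (by left; rfl)
        (by rw [Real.dist_eq]; rw [abs_of_nonpos (by linarith)]; linarith)
  have hm2 : (2*r + r/2) ∈ S := by
    constructor
    · exact mem_cthickening_of_dist_le _ (2*r) _ _ ⟨by linarith, le_refl _⟩
        (by rw [Real.dist_eq]; rw [abs_of_nonneg (by linarith)]; linarith)
    · exact mem_cthickening_of_dist_le _ (2*r) _ _ (by right; rfl)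
        (by rw [Real.dist_eq]; rw [abs_of_nonneg (by linarith)]; linarith)
  apply le_antisymm
  · calc Metric.diam S ≤ Metric.diam (Metric.cthickening (r / 2) (Set.Icc (0:ℝ) (2*r))) :=
          Metric.diam_mono inter_subset_left ((Metric.isBounded_Icc _ _).cthickening)
      _ ≤ Metric.diam (Set.Icc (0:ℝ) (2*r)) + 2 * (r/2) :=
          Metric.diam_cthickening_le _ (by linarith)
      _ = 3 * r := by rw [Real.diam_Icc (by linarith)]; ring
  · have := Metric.dist_le_diam_of_mem hbd hm1 hm2
    rw [Real.dist_eq, abs_of_nonpos (by linarith)] at this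
    linarith
end

section
/- Let X be a proper (boundedly compact) metric space with strictly intrinsic metric, A, B nonempty compact subsets, r = d_H(A,B), and for s ∈ [0,r] let C_s(A,B) = B_s(A) ∩ B_{r−s}(B). Then s ↦ C_s(A,B) is a geodesic in the hyperspace of nonempty compact subsets with the Hausdorff metric: d_H(C_s(A,B), C_t(A,B)) = |s−t| for all s,t ∈ [0,r]. -/
open Metric Set EMetric

lemma mem_cthick_iff {X : Type*} [MetricSpace X] {A : Set X} (hne : A.Nonempty)
    {δ : ℝ} (hδ : 0 ≤ δ) {x : X} : x ∈ cthickening δ A ↔ infDist x A ≤ δ := by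
  rw [mem_cthickening_iff, ENNReal.le_ofReal_iff_toReal_le (infEdist_ne_top hne) hδ, infDist]

/-- Move from `x` a distance at most `u` toward `b` along a geodesic. -/
lemma move {X : Type*} [MetricSpace X]
    (hgeo : ∀ x y : X, ∃ γ : ℝ → X, γ 0 = x ∧ γ 1 = y ∧
      ∀ s ∈ Icc (0 : ℝ) 1, ∀ t ∈ Icc (0 : ℝ) 1, dist (γ s) (γ t) = |s - t| * dist x y)
    (x b : X) {u : ℝ} (hu : 0 ≤ u) :
    ∃ y : X, dist x y ≤ u ∧ dist y b ≤ max (dist x b - u) 0 := by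
  rcases eq_or_lt_of_le (dist_nonneg (x := x) (y := b)) with hd | hd
  · exact ⟨x, by simpa using hu, by rw [← hd]; exact le_max_right _ _⟩
  · obtain ⟨γ, h0, h1, hγ⟩ := hgeo x b
    set d := dist x b with hdd
    set c : ℝ := min (u / d) 1 with hc
    have hc0 : 0 ≤ c := le_min (div_nonneg hu hd.le) one_pos.le
    have hc1 : c ≤ 1 := min_le_right _ _
    refine ⟨γ c, ?_, ?_⟩
    · have := hγ 0 ⟨le_refl 0, one_pos.le⟩ c ⟨hc0, hc1⟩
      rw [h0] at this
      rw [this, abs_of_nonpos (by linarith), neg_sub, sub_zero]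
      calc c * d ≤ (u / d) * d := by
            exact mul_le_mul_of_nonneg_right (min_le_left _ _) hd.le
        _ = u := div_mul_cancel₀ u hd.ne'
    · have := hγ c ⟨hc0, hc1⟩ 1 ⟨one_pos.le, le_refl 1⟩
      rw [h1] at this
      rw [this, abs_of_nonpos (by linarith)]
      have : -(c - 1) * d = d - c * d := by ring
      rw [this]
      rcases min_cases (u / d) 1 with ⟨he, hle⟩ | ⟨he, hlt⟩
      · have : c * d = u := by rw [hc, he, div_mul_cancel₀ u hd.ne']
        rw [this]; exact le_max_left _ _
      · have : c * d = d := by rw [hc, he, one_mul]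
        rw [this]; simp

/-- Key helper: if `x` is within `p` of `S` and within `q` of `T` (compact nonempty),
and `0 ≤ u ≤ q`, then there is `y` with `dist x y ≤ u`, within `p + u` of `S` and
within `q - u` of `T`. -/
lemma step {X : Type*} [MetricSpace X]
    (hgeo : ∀ x y : X, ∃ γ : ℝ → X, γ 0 = x ∧ γ 1 = y ∧
      ∀ s ∈ Icc (0 : ℝ) 1, ∀ t ∈ Icc (0 : ℝ) 1, dist (γ s) (γ t) = |s - t| * dist x y)
    {S T : Set X} (hT : IsCompact T) (hTne : T.Nonempty)
    {x : X} {p q u : ℝ} (hp : infDist x S ≤ p) (hq : infDist x T ≤ q)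
    (hu : 0 ≤ u) (huq : u ≤ q) :
    ∃ y : X, dist x y ≤ u ∧ infDist y S ≤ p + u ∧ infDist y T ≤ q - u := by
  obtain ⟨b, hbT, hb⟩ := hT.exists_infDist_eq_dist hTne x
  obtain ⟨y, hxy, hyb⟩ := move hgeo x b hu
  refine ⟨y, hxy, ?_, ?_⟩
  · calc infDist y S ≤ infDist x S + dist y x := infDist_le_infDist_add_dist
      _ ≤ p + u := by rw [dist_comm]; exact add_le_add hp hxy
  · calc infDist y T ≤ dist y b := infDist_le_dist_of_mem hbT
      _ ≤ max (dist x b - u) 0 := hyb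
      _ ≤ q - u := max_le (by rw [← hb] at *; linarith) (by linarith)

/-- In a proper metric space with strictly intrinsic metric, the sets
`C_s(A,B) = B_s(A) ∩ B_{r-s}(B)` form a geodesic in the Hausdorff metric from `A` to `B`. -/
theorem hausdorff_geodesic_of_properly_intrinsic {X : Type*} [MetricSpace X] [ProperSpace X]
    (hgeo : ∀ x y : X, ∃ γ : ℝ → X, γ 0 = x ∧ γ 1 = y ∧
      ∀ s ∈ Icc (0 : ℝ) 1, ∀ t ∈ Icc (0 : ℝ) 1, dist (γ s) (γ t) = |s - t| * dist x y)
    (A B : Set X) (hA : IsCompact A) (hAne : A.Nonempty)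
    (hB : IsCompact B) (hBne : B.Nonempty) :
    ∀ s ∈ Icc (0 : ℝ) (hausdorffDist A B), ∀ t ∈ Icc (0 : ℝ) (hausdorffDist A B),
      hausdorffDist
        (cthickening s A ∩ cthickening (hausdorffDist A B - s) B)
        (cthickening t A ∩ cthickening (hausdorffDist A B - t) B) = |s - t| := by
  set r := hausdorffDist A B with hr
  have hAB : hausdorffEdist A B ≠ ⊤ :=
    hausdorffEdist_ne_top_of_nonempty_of_bounded hAne hBne hA.isBounded hB.isBounded
  have hr0 : 0 ≤ r := hausdorffDist_nonneg
  set C : ℝ → Set X := fun s => cthickening s A ∩ cthickening (r - s) B with hC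
  -- membership characterization
  have hmem : ∀ s ∈ Icc (0 : ℝ) r, ∀ x : X,
      x ∈ C s ↔ infDist x A ≤ s ∧ infDist x B ≤ r - s := by
    intro s hs x
    have h2 : (0:ℝ) ≤ r - s := by linarith [hs.2]
    rw [hC]
    simp only [mem_inter_iff, mem_cthick_iff hAne hs.1, mem_cthick_iff hBne h2]
  -- for every a ∈ A there is y ∈ C s with dist a y ≤ s
  have hAC : ∀ s ∈ Icc (0 : ℝ) r, ∀ a ∈ A, ∃ y ∈ C s, dist a y ≤ s := by
    intro s hs a ha
    have h1 : infDist a A ≤ 0 := by rw [infDist_zero_of_mem ha]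
    have h2 : infDist a B ≤ r := infDist_le_hausdorffDist_of_mem ha hAB
    obtain ⟨y, hxy, hyA, hyB⟩ := step (u := s) hgeo hB hBne h1 h2 hs.1 hs.2
    exact ⟨y, (hmem s hs y).2 ⟨by linarith, hyB⟩, hxy⟩
  -- for every b ∈ B there is y ∈ C s with dist b y ≤ r - s
  have hBC : ∀ s ∈ Icc (0 : ℝ) r, ∀ b ∈ B, ∃ y ∈ C s, dist b y ≤ r - s := by
    intro s hs b hb
    have h1 : infDist b B ≤ 0 := by rw [infDist_zero_of_mem hb]
    have h2 : infDist b A ≤ r := by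
      rw [hr, hausdorffDist_comm]
      exact infDist_le_hausdorffDist_of_mem hb (by rwa [hausdorffEdist_comm])
    obtain ⟨y, hxy, hyB, hyA⟩ := step (u := r - s) hgeo hA hAne h1 h2 (by linarith [hs.2]) (by linarith [hs.1])
    refine ⟨y, (hmem s hs y).2 ⟨by linarith, by linarith⟩, hxy⟩
  have hCne : ∀ s ∈ Icc (0 : ℝ) r, (C s).Nonempty := by
    intro s hs
    obtain ⟨a, ha⟩ := hAne
    obtain ⟨y, hy, -⟩ := hAC s hs a ha
    exact ⟨y, hy⟩
  have hCbd : ∀ s : ℝ, Bornology.IsBounded (C s) := fun s =>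
    (hA.isBounded.cthickening.subset inter_subset_left)
  have hone : ∀ s ∈ Icc (0 : ℝ) r, ∀ (U : Set X), U.Nonempty → Bornology.IsBounded U →
      hausdorffEdist (C s) U ≠ ⊤ := fun s hs U hU hUb =>
    hausdorffEdist_ne_top_of_nonempty_of_bounded (hCne s hs) hU (hCbd s) hUb
  -- d_H(A, C s) ≤ s
  have hdAC : ∀ s ∈ Icc (0 : ℝ) r, hausdorffDist A (C s) ≤ s := by
    intro s hs
    refine hausdorffDist_le_of_mem_dist hs.1 (hAC s hs) ?_
    intro y hy
    have := ((hmem s hs y).1 hy).1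
    obtain ⟨a, haA, ha⟩ := hA.exists_infDist_eq_dist hAne y
    rw [ha] at this
    exact ⟨a, haA, this⟩
  -- d_H(C s, B) ≤ r - s
  have hdCB : ∀ s ∈ Icc (0 : ℝ) r, hausdorffDist (C s) B ≤ r - s := by
    intro s hs
    refine hausdorffDist_le_of_mem_dist (by linarith [hs.2]) ?_ (hBC s hs)
    intro y hy
    have := ((hmem s hs y).1 hy).2
    obtain ⟨b, hbB, hb⟩ := hB.exists_infDist_eq_dist hBne y
    exact ⟨b, hbB, by rw [hb] at this; exact this⟩
  -- main claim for s ≤ t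
  have key : ∀ s ∈ Icc (0 : ℝ) r, ∀ t ∈ Icc (0 : ℝ) r, s ≤ t →
      hausdorffDist (C s) (C t) = t - s := by
    intro s hs t ht hst
    have hub : hausdorffDist (C s) (C t) ≤ t - s := by
      refine hausdorffDist_le_of_mem_dist (by linarith) ?_ ?_
      · intro x hx
        obtain ⟨hxA, hxB⟩ := (hmem s hs x).1 hx
        obtain ⟨y, hxy, hyA, hyB⟩ := step (u := t - s) hgeo hB hBne hxA hxB (by linarith)
          (by linarith [ht.2])
        exact ⟨y, (hmem t ht y).2 ⟨by linarith, by linarith⟩, hxy⟩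
      · intro x hx
        obtain ⟨hxA, hxB⟩ := (hmem t ht x).1 hx
        obtain ⟨y, hxy, hyB, hyA⟩ := step (u := t - s) hgeo hA hAne hxB hxA (by linarith) (by linarith [hs.1])
        exact ⟨y, (hmem s hs y).2 ⟨by linarith, by linarith⟩, hxy⟩
    have hlb : t - s ≤ hausdorffDist (C s) (C t) := by
      have h1 : hausdorffDist A B ≤ hausdorffDist A (C s) + hausdorffDist (C s) B := by
        refine hausdorffDist_triangle ?_
        rw [hausdorffEdist_comm]
        exact hone s hs A hAne hA.isBounded
      have h2 : hausdorffDist (C s) B ≤ hausdorffDist (C s) (C t) + hausdorffDist (C t) B :=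
        hausdorffDist_triangle (hone s hs (C t) (hCne t ht) (hCbd t))
      have h3 := hdAC s hs
      have h4 := hdCB t ht
      rw [← hr] at h1
      linarith
    linarith
  intro s hs t ht
  rcases le_total s t with h | h
  · rw [key s hs t ht h, abs_of_nonpos (by linarith), neg_sub]
  · rw [hausdorffDist_comm, key t ht s hs h, abs_of_nonneg (by linarith)]
end

section
/- Let X be a proper metric space with strictly intrinsic metric, A, B nonempty compact subsets, r = d_H(A,B), s ∈ [0,r]. Then C_s(A,B) = B_s(A) ∩ B_{r−s}(B) is nonempty and compact, and it is in s-position between A and B: d_H(A, C_s(A,B)) = s and d_H(C_s(A,B), B) = r − s. -/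
open Metric Set

/-- In a proper metric space with strictly intrinsic metric, `C_s(A,B)` is a nonempty compact
set in `s`-position between `A` and `B`. -/
theorem Cs_in_s_position {X : Type*} [MetricSpace X] [ProperSpace X]
    (hgeo : ∀ x y : X, ∃ γ : ℝ → X, γ 0 = x ∧ γ 1 = y ∧
      ∀ s ∈ Icc (0 : ℝ) 1, ∀ t ∈ Icc (0 : ℝ) 1, dist (γ s) (γ t) = |s - t| * dist x y)
    (A B : Set X) (hA : IsCompact A) (hAne : A.Nonempty)
    (hB : IsCompact B) (hBne : B.Nonempty)
    (s : ℝ) (hs : s ∈ Icc (0 : ℝ) (hausdorffDist A B)) :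
    (cthickening s A ∩ cthickening (hausdorffDist A B - s) B).Nonempty ∧
    IsCompact (cthickening s A ∩ cthickening (hausdorffDist A B - s) B) ∧
    hausdorffDist A (cthickening s A ∩ cthickening (hausdorffDist A B - s) B) = s ∧
    hausdorffDist (cthickening s A ∩ cthickening (hausdorffDist A B - s) B) B
      = hausdorffDist A B - s := by
  obtain ⟨hs0, hsr⟩ := hs
  set r := hausdorffDist A B with hr
  set C := cthickening s A ∩ cthickening (r - s) B with hC
  have hAB : EMetric.hausdorffEdist A B ≠ ⊤ :=
    hausdorffEdist_ne_top_of_nonempty_of_bounded hAne hBne hA.isBounded hB.isBounded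
  -- key construction: a midpoint witness
  have key : ∀ a ∈ A, ∀ b ∈ B, dist a b ≤ r →
      ∃ c, c ∈ C ∧ dist a c ≤ s ∧ dist b c ≤ r - s := by
    intro a ha b hb hab
    by_cases hd : dist a b ≤ s
    · refine ⟨b, ⟨mem_cthickening_of_dist_le b a s A ha (by rwa [dist_comm]),
        self_subset_cthickening _ hb⟩, hd, by simp; linarith⟩
    · push_neg at hd
      have hdpos : 0 < dist a b := lt_of_le_of_lt hs0 hd
      obtain ⟨γ, h0, h1, hγ⟩ := hgeo a b
      set t := s / dist a b with ht
      have ht0 : 0 ≤ t := div_nonneg hs0 hdpos.le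
      have ht1 : t ≤ 1 := (div_le_one hdpos).2 hd.le
      have hac : dist a (γ t) = s := by
        have h := hγ 0 ⟨le_refl 0, zero_le_one⟩ t ⟨ht0, ht1⟩
        rw [h0] at h
        rw [h, abs_of_nonpos (by linarith), ht]
        field_simp
        ring
      have hcb : dist (γ t) b = dist a b - s := by
        have h := hγ t ⟨ht0, ht1⟩ 1 ⟨zero_le_one, le_refl 1⟩
        rw [h1] at h
        rw [h, abs_of_nonpos (by linarith), ht]
        field_simp
        ring
      refine ⟨γ t, ⟨mem_cthickening_of_dist_le (γ t) a s A ha (by rw [dist_comm, hac]),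
        mem_cthickening_of_dist_le (γ t) b (r-s) B hb (by rw [hcb]; linarith)⟩,
        le_of_eq hac, by rw [dist_comm, hcb]; linarith⟩
  -- nonemptiness
  obtain ⟨a₀, ha₀⟩ := id hAne
  obtain ⟨b₀, hb₀, hab₀⟩ := hB.exists_infDist_eq_dist hBne a₀
  have hab₀r : dist a₀ b₀ ≤ r := by
    rw [← hab₀]; exact infDist_le_hausdorffDist_of_mem ha₀ hAB
  obtain ⟨c₀, hc₀, -, -⟩ := key a₀ ha₀ b₀ hb₀ hab₀r
  have hCne : C.Nonempty := ⟨c₀, hc₀⟩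
  -- compactness
  have hCcpt : IsCompact C := (hA.cthickening).inter_right (isClosed_cthickening)
  -- upper bounds
  have hACle : hausdorffDist A C ≤ s := by
    apply hausdorffDist_le_of_infDist hs0
    · intro a ha
      obtain ⟨b, hb, hab⟩ := hB.exists_infDist_eq_dist hBne a
      have habr : dist a b ≤ r := by
        rw [← hab]; exact infDist_le_hausdorffDist_of_mem ha hAB
      obtain ⟨c, hc, hac, -⟩ := key a ha b hb habr
      exact le_trans (infDist_le_dist_of_mem hc) hac
    · intro c hc
      have := hc.1
      rw [mem_cthickening_iff] at this
      calc infDist c A = (EMetric.infEdist c A).toReal := rfl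
        _ ≤ (ENNReal.ofReal s).toReal := ENNReal.toReal_mono ENNReal.ofReal_ne_top this
        _ = s := ENNReal.toReal_ofReal hs0
  have hCBle : hausdorffDist C B ≤ r - s := by
    rw [hausdorffDist_comm]
    apply hausdorffDist_le_of_infDist (by linarith)
    · intro b hb
      obtain ⟨a, ha, hba⟩ := hA.exists_infDist_eq_dist hAne b
      have habr : dist a b ≤ r := by
        rw [dist_comm, ← hba]
        calc infDist b A ≤ hausdorffDist B A :=
              infDist_le_hausdorffDist_of_mem hb (by rwa [EMetric.hausdorffEdist_comm])
          _ = r := hausdorffDist_comm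
      obtain ⟨c, hc, -, hbc⟩ := key a ha b hb habr
      exact le_trans (infDist_le_dist_of_mem hc) hbc
    · intro c hc
      have := hc.2
      rw [mem_cthickening_iff] at this
      calc infDist c B = (EMetric.infEdist c B).toReal := rfl
        _ ≤ (ENNReal.ofReal (r - s)).toReal := ENNReal.toReal_mono ENNReal.ofReal_ne_top this
        _ = r - s := ENNReal.toReal_ofReal (by linarith)
  -- finiteness for triangle inequality
  have hCbdd : Bornology.IsBounded C := hCcpt.isBounded
  have hACfin : EMetric.hausdorffEdist A C ≠ ⊤ :=
    hausdorffEdist_ne_top_of_nonempty_of_bounded hAne hCne hA.isBounded hCbdd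
  have htri : r ≤ hausdorffDist A C + hausdorffDist C B := hausdorffDist_triangle hACfin
  refine ⟨hCne, hCcpt, by linarith, by linarith⟩
end

section
/- Let M = {1,…,n}, n ≥ 3, be a finite metric space with e(M) > 0, and choose 0 < ε ≤ (1/4)·min{s(M), e(M)}. Let X, Y be compact metric spaces with 2·d_GH(M,X) < ε and 2·d_GH(M,Y) < ε, with canonical partitions {X_i} and {Y_i} with respect to M. Then every optimal correspondence R between X and Y decomposes as R = ⊔_{i=1}^n R_i where R_i is a correspondence between X_i and Y_i. -/
open GromovHausdorff Set

/-- `s(M)`: the smallest nonzero distance of `M`. -/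
noncomputable def sepM (M : Type*) [MetricSpace M] : ℝ :=
  sInf {d : ℝ | ∃ x y : M, x ≠ y ∧ d = dist x y}

/-- `e(M)`: the least gap between distinct nonzero distances of `M`. -/
noncomputable def excM (M : Type*) [MetricSpace M] : ℝ :=
  sInf {d : ℝ | ∃ x y z w : M, x ≠ y ∧ z ≠ w ∧ ({x, y} : Set M) ≠ {z, w} ∧
    d = |dist x y - dist z w|}

/-- Every optimal correspondence between `X` and `Y` decomposes along the canonical
partitions with respect to `M`. -/
theorem optimal_correspondence_decomposes (M : Type*) [MetricSpace M] [Fintype M] [Nonempty M]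
    (hn : 3 ≤ Fintype.card M) (he : 0 < excM M)
    (X Y : Type*) [MetricSpace X] [CompactSpace X] [Nonempty X]
    [MetricSpace Y] [CompactSpace Y] [Nonempty Y]
    (ε : ℝ) (hε0 : 0 < ε) (hε : ε ≤ (1 / 4) * min (sepM M) (excM M))
    (hX : 2 * GromovHausdorff.ghDist M X < ε) (hY : 2 * GromovHausdorff.ghDist M Y < ε)
    (P : M → Set X) (Q : M → Set Y)
    (hP : (∀ i, (P i).Nonempty) ∧ (Pairwise fun i j => Disjoint (P i) (P j)) ∧
      (⋃ i, P i) = Set.univ ∧ (∀ i, Metric.diam (P i) < ε) ∧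
      (∀ i j, ∀ x ∈ P i, ∀ x' ∈ P j, |dist x x' - dist i j| < ε))
    (hQ : (∀ i, (Q i).Nonempty) ∧ (Pairwise fun i j => Disjoint (Q i) (Q j)) ∧
      (⋃ i, Q i) = Set.univ ∧ (∀ i, Metric.diam (Q i) < ε) ∧
      (∀ i j, ∀ y ∈ Q i, ∀ y' ∈ Q j, |dist y y' - dist i j| < ε))
    (R : Set (X × Y)) (hR : IsCorrespondence R)
    (hopt : GromovHausdorff.ghDist X Y = distortion R / 2) :
    R = ⋃ i, R ∩ (P i ×ˢ Q i) ∧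
    ∀ i, (∀ x ∈ P i, ∃ y ∈ Q i, (x, y) ∈ R) ∧ (∀ y ∈ Q i, ∃ x ∈ P i, (x, y) ∈ R) := by
  obtain ⟨hP1, hP2, hP3, hP4, hP5⟩ := hP
  obtain ⟨hQ1, hQ2, hQ3, hQ4, hQ5⟩ := hQ
  -- 4ε bounds
  have h4s : 4 * ε ≤ sepM M := by
    have := min_le_left (sepM M) (excM M); nlinarith
  have h4e : 4 * ε ≤ excM M := by
    have := min_le_right (sepM M) (excM M); nlinarith
  have hsep : ∀ i j : M, i ≠ j → sepM M ≤ dist i j := fun i j h =>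
    csInf_le ⟨0, fun d ⟨x, y, _, hd⟩ => hd ▸ dist_nonneg⟩ ⟨i, j, h, rfl⟩
  have hexc : ∀ i j k l : M, i ≠ j → k ≠ l → ({i, j} : Set M) ≠ {k, l} →
      excM M ≤ |dist i j - dist k l| := fun i j k l h1 h2 h3 =>
    csInf_le ⟨0, fun d ⟨x, y, z, w, _, _, _, hd⟩ => hd ▸ abs_nonneg _⟩
      ⟨i, j, k, l, h1, h2, h3, rfl⟩
  -- membership in the partitions
  have hmemP : ∀ x : X, ∃ i, x ∈ P i := by
    intro x
    have : x ∈ ⋃ i, P i := hP3 ▸ mem_univ x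
    simpa using this
  have hmemQ : ∀ y : Y, ∃ i, y ∈ Q i := by
    intro y
    have : y ∈ ⋃ i, Q i := hQ3 ▸ mem_univ y
    simpa using this
  have huniqP : ∀ {i j : M} {x : X}, x ∈ P i → x ∈ P j → i = j := by
    intro i j x hi hj
    by_contra h
    exact (hP2 h).le_bot ⟨hi, hj⟩ |>.elim
  have huniqQ : ∀ {i j : M} {y : Y}, y ∈ Q i → y ∈ Q j → i = j := by
    intro i j y hi hj
    by_contra h
    exact (hQ2 h).le_bot ⟨hi, hj⟩ |>.elim
  -- distortion bound
  have hdis : ∀ p ∈ R, ∀ q ∈ R, |dist p.1 q.1 - dist p.2 q.2| < 2 * ε := by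
    have hbdd : BddAbove {d : ℝ | ∃ p ∈ R, ∃ q ∈ R, d = |dist p.1 q.1 - dist p.2 q.2|} := by
      refine ⟨Metric.diam (univ : Set X) + Metric.diam (univ : Set Y), ?_⟩
      rintro d ⟨p, _, q, _, rfl⟩
      have h1 : dist p.1 q.1 ≤ Metric.diam (univ : Set X) :=
        Metric.dist_le_diam_of_mem isCompact_univ.isBounded (mem_univ _) (mem_univ _)
      have h2 : dist p.2 q.2 ≤ Metric.diam (univ : Set Y) :=
        Metric.dist_le_diam_of_mem isCompact_univ.isBounded (mem_univ _) (mem_univ _)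
      have := abs_sub_abs_le_abs_sub (dist p.1 q.1) (dist p.2 q.2)
      have h3 := abs_sub (dist p.1 q.1) (dist p.2 q.2)
      have := dist_nonneg (x := p.1) (y := q.1)
      have := dist_nonneg (x := p.2) (y := q.2)
      rw [abs_sub_le_iff]
      constructor <;> nlinarith
    intro p hp q hq
    have hle : |dist p.1 q.1 - dist p.2 q.2| ≤ distortion R :=
      le_csSup hbdd ⟨p, hp, q, hq, rfl⟩
    have htri : GromovHausdorff.ghDist X Y ≤
        GromovHausdorff.ghDist M X + GromovHausdorff.ghDist M Y := by
      unfold GromovHausdorff.ghDist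
      rw [dist_comm (toGHSpace M) (toGHSpace X)]
      exact dist_triangle _ _ _
    have : distortion R < 2 * ε := by
      rw [hopt] at htri; linarith
    linarith
  -- well-definedness of the part-matching
  have claim1 : ∀ (i j j' : M) (x x' : X) (y y' : Y), (x, y) ∈ R → (x', y') ∈ R →
      x ∈ P i → x' ∈ P i → y ∈ Q j → y' ∈ Q j' → j = j' := by
    intro i j j' x x' y y' hxy hxy' hxi hx'i hyj hy'j'
    by_contra hjj'
    have h1 : |dist x x' - dist i i| < ε := hP5 i i x hxi x' hx'i
    have h2 : |dist y y' - dist j j'| < ε := hQ5 j j' y hyj y' hy'j'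
    have h3 := hdis _ hxy _ hxy'
    simp only [dist_self] at h1
    have h4 := hsep j j' hjj'
    rw [abs_sub_lt_iff] at h1 h2
    rw [abs_sub_lt_iff] at h3
    simp only at h3
    have := dist_nonneg (x := x) (y := x')
    linarith
  -- the matching function φ
  have hφex : ∀ i : M, ∃ j : M, ∃ x : X, ∃ y : Y, x ∈ P i ∧ y ∈ Q j ∧ (x, y) ∈ R := by
    intro i
    obtain ⟨x, hx⟩ := hP1 i
    obtain ⟨y, hy⟩ := hR.1 x
    obtain ⟨j, hj⟩ := hmemQ y
    exact ⟨j, x, y, hx, hj, hy⟩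
  choose φ xf yf hxf hyf hRf using hφex
  have hφ : ∀ (i j : M) (x : X) (y : Y), x ∈ P i → y ∈ Q j → (x, y) ∈ R → j = φ i := by
    intro i j x y hx hy hxy
    exact claim1 i j (φ i) x (xf i) y (yf i) hxy (hRf i) hx (hxf i) hy (hyf i)
  have hsurj : Function.Surjective φ := by
    intro j
    obtain ⟨y, hy⟩ := hQ1 j
    obtain ⟨x, hx⟩ := hR.2 y
    obtain ⟨i, hi⟩ := hmemP x
    exact ⟨i, (hφ i j x y hi hy hx).symm⟩
  have hinj : Function.Injective φ := Finite.injective_iff_surjective.mpr hsurj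
  -- φ preserves pairs
  have hiso : ∀ i i' : M, i ≠ i' → ({i, i'} : Set M) = {φ i, φ i'} := by
    intro i i' hne
    by_contra h
    have hφne : φ i ≠ φ i' := fun hc => hne (hinj hc)
    have h1 : |dist (xf i) (xf i') - dist i i'| < ε := hP5 i i' _ (hxf i) _ (hxf i')
    have h2 : |dist (yf i) (yf i') - dist (φ i) (φ i')| < ε := hQ5 _ _ _ (hyf i) _ (hyf i')
    have h3 := hdis _ (hRf i) _ (hRf i')
    simp only at h3
    have h4 := hexc i i' (φ i) (φ i') hne hφne h
    rw [abs_sub_lt_iff] at h1 h2 h3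
    rcases abs_cases (dist i i' - dist (φ i) (φ i')) with ⟨heq, _⟩ | ⟨heq, _⟩ <;>
      rw [heq] at h4 <;> linarith [h1.1, h1.2, h2.1, h2.2, h3.1, h3.2]
  -- φ is the identity
  have hid : ∀ i : M, φ i = i := by
    classical
    intro i
    have hcard : 2 ≤ (Finset.univ.erase i).card := by
      rw [Finset.card_erase_of_mem (Finset.mem_univ i), Finset.card_univ]
      omega
    obtain ⟨j, hj, k, hk, hjk⟩ := Finset.one_lt_card.mp (by omega : 1 < (Finset.univ.erase i).card)
    have hji : j ≠ i := Finset.ne_of_mem_erase hj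
    have hki : k ≠ i := Finset.ne_of_mem_erase hk
    have h1 : φ i ∈ ({i, j} : Set M) := by
      rw [hiso i j (Ne.symm hji)]; exact mem_insert _ _
    have h2 : φ i ∈ ({i, k} : Set M) := by
      rw [hiso i k (Ne.symm hki)]; exact mem_insert _ _
    simp only [mem_insert_iff, mem_singleton_iff] at h1 h2
    rcases h1 with h1 | h1
    · exact h1
    · rcases h2 with h2 | h2
      · exact h2
      · exact absurd (h1.symm.trans h2) hjk
  -- conclusion
  have hmain : ∀ (x : X) (y : Y), (x, y) ∈ R → ∀ i, x ∈ P i → y ∈ Q i := by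
    intro x y hxy i hx
    obtain ⟨j, hj⟩ := hmemQ y
    have : j = φ i := hφ i j x y hx hj hxy
    rw [this, hid i] at hj
    exact hj
  constructor
  · ext ⟨x, y⟩
    constructor
    · intro hxy
      obtain ⟨i, hi⟩ := hmemP x
      exact mem_iUnion.mpr ⟨i, hxy, hi, hmain x y hxy i hi⟩
    · intro hxy
      obtain ⟨i, hi, -⟩ := mem_iUnion.mp hxy
      exact hi
  · intro i
    constructor
    · intro x hx
      obtain ⟨y, hy⟩ := hR.1 x
      exact ⟨y, hmain x y hy i hx, hy⟩
    · intro y hy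
      obtain ⟨x, hx⟩ := hR.2 y
      obtain ⟨i', hi'⟩ := hmemP x
      have : y ∈ Q i' := hmain x y hx i' hi'
      rw [huniqQ hy this]
      exact ⟨x, hi', hx⟩
end
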